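/- arXiv:2112.03646 — 2 statements merged into one kernel-verified Lean document; each statement's English description precedes it below -/
import Mathlib

section
/- Let R be a commutative ring, F a formal group law over R with formal inverse ι, and let H₂ ∈ R[[U,V]] be the unique power series such that H₂(−X·ι(X), −Y·ι(Y)) = F(X,Y)·F(ι(X),ι(Y))·F(ι(X),Y)·F(X,ι(Y)) in R[[X,Y]]. Then the diagonal substitution of H₂ vanishes: H₂(U,U) = 0 in R[[U]]. (In Buchstaber's terminology, the 2-valued series F̄²_t = 1 + H₁t + H₂t² associated to F is of type I.) -/
noncomputable section

/-- The weight (total degree) of a multi-exponent. -/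
def wt {τ : Type*} (d : τ →₀ ℕ) : ℕ := d.sum fun _ e => e

/-- Substitution of a family of multivariate power series (each having zero constant
coefficient) into a multivariate power series in finitely many variables.  The coefficient
of the result in multidegree `d` is computed from a sufficiently large truncation of `f`;
this agrees with the usual substitution whenever every `a i` has zero constant coefficient. -/
def msubst {R : Type*} [CommRing R] {k : ℕ} {τ : Type*}
    (a : Fin k → MvPowerSeries τ R) (f : MvPowerSeries (Fin k) R) : MvPowerSeries τ R :=
  fun d => MvPowerSeries.coeff d
    (MvPolynomial.eval₂ (MvPowerSeries.C : R →+* MvPowerSeries τ R) a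
      (MvPowerSeries.trunc R (Finsupp.equivFunOnFinite.symm fun _ => wt d + 1) f))

/-- Substitution of a multivariate power series with zero constant coefficient into a
one-variable power series. -/
def psubst {R : Type*} [CommRing R] {τ : Type*}
    (a : MvPowerSeries τ R) (f : PowerSeries R) : MvPowerSeries τ R :=
  fun d => MvPowerSeries.coeff d
    (Polynomial.eval₂ (MvPowerSeries.C : R →+* MvPowerSeries τ R) a (PowerSeries.trunc (wt d + 1) f))

/-- A (one-dimensional, commutative) formal group law over `R`:
`F(X,0) = X`, `F(0,Y) = Y`, `F(X,Y) = F(Y,X)` and `F(F(X,Y),Z) = F(X,F(Y,Z))`. -/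
structure IsFGL {R : Type*} [CommRing R] (F : MvPowerSeries (Fin 2) R) : Prop where
  zero_right : msubst ![MvPowerSeries.X 0, 0] F = (MvPowerSeries.X 0 : MvPowerSeries (Fin 2) R)
  zero_left : msubst ![0, MvPowerSeries.X 1] F = (MvPowerSeries.X 1 : MvPowerSeries (Fin 2) R)
  comm : msubst ![MvPowerSeries.X 1, MvPowerSeries.X 0] F = F
  assoc : msubst ![msubst ![(MvPowerSeries.X 0 : MvPowerSeries (Fin 3) R), MvPowerSeries.X 1] F,
        MvPowerSeries.X 2] F
      = msubst ![(MvPowerSeries.X 0 : MvPowerSeries (Fin 3) R),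
        msubst ![MvPowerSeries.X 1, MvPowerSeries.X 2] F] F

/-- `ι` is the formal inverse of the formal group law `F`: it is composable and
`F(X, ι(X)) = 0` in `R[[X]]`. -/
def IsFormalInverse {R : Type*} [CommRing R] (F : MvPowerSeries (Fin 2) R)
    (ι : PowerSeries R) : Prop :=
  PowerSeries.constantCoeff ι = 0 ∧
    msubst ![(PowerSeries.X : PowerSeries R), ι] F = 0

end

/-- `ι(X)` viewed as a two-variable power series. -/
noncomputable def iX {R : Type*} [CommRing R] (ι : PowerSeries R) : MvPowerSeries (Fin 2) R :=
  psubst (MvPowerSeries.X 0) ι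

/-- `ι(Y)` viewed as a two-variable power series. -/
noncomputable def iY {R : Type*} [CommRing R] (ι : PowerSeries R) : MvPowerSeries (Fin 2) R :=
  psubst (MvPowerSeries.X 1) ι



noncomputable section

open MvPowerSeries

open MvPowerSeries

variable {R : Type*} [CommRing R] {τ : Type*}

/-- `f` lies in the `n`-th piece of the weight filtration. -/
def Wlow (n : ℕ) (f : MvPowerSeries τ R) : Prop :=
  ∀ d : τ →₀ ℕ, wt d < n → coeff d f = 0

lemma wt_add (a b : τ →₀ ℕ) : wt (a + b) = wt a + wt b :=
  Finsupp.sum_add_index' (fun _ => rfl) (fun _ _ _ => rfl)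

lemma wt_single (i : τ) (n : ℕ) : wt (Finsupp.single i n) = n :=
  Finsupp.sum_single_index rfl

@[simp] lemma wt_zero : wt (0 : τ →₀ ℕ) = 0 := Finsupp.sum_zero_index

lemma le_wt (d : τ →₀ ℕ) (i : τ) : d i ≤ wt d := by
  by_cases h : i ∈ d.support
  · exact Finset.single_le_sum (f := fun j => d j) (fun _ _ => Nat.zero_le _) h
  · simp [Finsupp.notMem_support_iff.mp h]

lemma wt_eq_zero_iff {d : τ →₀ ℕ} : wt d = 0 ↔ d = 0 := by
  constructor
  · intro h
    ext i
    have := le_wt d i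
    simp only [Finsupp.coe_zero, Pi.zero_apply]
    omega
  · rintro rfl; simp

lemma wlow_of_constantCoeff {f : MvPowerSeries τ R} (h : constantCoeff f = 0) :
    Wlow 1 f := by
  intro d hd
  have hd0 : d = 0 := wt_eq_zero_iff.mp (by omega)
  subst hd0
  exact h

lemma Wlow.mono {m n : ℕ} (h : m ≤ n) {f : MvPowerSeries τ R} (hf : Wlow n f) : Wlow m f :=
  fun d hd => hf d (lt_of_lt_of_le hd h)

lemma wlow_zero (n : ℕ) : Wlow n (0 : MvPowerSeries τ R) := fun _ _ => map_zero _

lemma Wlow.add {m : ℕ} {f g : MvPowerSeries τ R} (hf : Wlow m f) (hg : Wlow m g) :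
    Wlow m (f + g) := fun d hd => by rw [map_add, hf d hd, hg d hd, add_zero]

lemma Wlow.neg {m : ℕ} {f : MvPowerSeries τ R} (hf : Wlow m f) : Wlow m (-f) :=
  fun d hd => by rw [map_neg, hf d hd, neg_zero]

lemma Wlow.sub {m : ℕ} {f g : MvPowerSeries τ R} (hf : Wlow m f) (hg : Wlow m g) :
    Wlow m (f - g) := by rw [sub_eq_add_neg]; exact hf.add hg.neg

lemma Wlow.mul {m n : ℕ} {f g : MvPowerSeries τ R} (hf : Wlow m f) (hg : Wlow n g) :
    Wlow (m + n) (f * g) := by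
  classical
  intro d hd
  rw [coeff_mul]
  refine Finset.sum_eq_zero fun p hp => ?_
  rw [Finset.HasAntidiagonal.mem_antidiagonal] at hp
  have hw : wt p.1 + wt p.2 = wt d := by rw [← wt_add, hp]
  rcases Nat.lt_or_ge (wt p.1) m with h1 | h1
  · rw [hf p.1 h1, zero_mul]
  · rw [hg p.2 (by omega), mul_zero]

lemma Wlow.pow {m : ℕ} {f : MvPowerSeries τ R} (hf : Wlow m f) (n : ℕ) :
    Wlow (n * m) (f ^ n) := by
  induction n with
  | zero => intro d hd; omega
  | succ n ih =>
      rw [pow_succ]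
      exact Wlow.mono (m := (n+1)*m) (le_of_eq (by ring)) (ih.mul hf)

lemma wlow_C_mul {n : ℕ} (c : R) {f : MvPowerSeries τ R} (hf : Wlow n f) :
    Wlow n ((C : R →+* MvPowerSeries τ R) c * f) := fun d hd => by rw [coeff_C_mul, hf d hd, mul_zero]

lemma wlow_X (i : τ) : Wlow 1 (X i : MvPowerSeries τ R) :=
  wlow_of_constantCoeff (constantCoeff_X i)

lemma wlow_prod {σ : Type*} (s : Finset σ) (g : σ → MvPowerSeries τ R) (n : σ → ℕ)
    (h : ∀ i ∈ s, Wlow (n i) (g i)) :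
    Wlow (∑ i ∈ s, n i) (∏ i ∈ s, g i) := by
  classical
  induction s using Finset.induction with
  | empty => intro d hd; simp at hd
  | insert _ _ hx ih =>
      rename_i a s
      rw [Finset.sum_insert hx, Finset.prod_insert hx]
      exact (h a (Finset.mem_insert_self a s)).mul
        (ih fun i hi => h i (Finset.mem_insert_of_mem hi))

end

noncomputable section

open MvPowerSeries

variable {R : Type*} [CommRing R] {k : ℕ} {τ : Type*} {a : Fin k → MvPowerSeries τ R}

lemma wlow_eval₂_monomial (ha : ∀ i, Wlow 1 (a i)) (e : Fin k →₀ ℕ) (c : R) :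
    Wlow (wt e) (MvPolynomial.eval₂ ((C : R →+* MvPowerSeries τ R)) a (MvPolynomial.monomial e c)) := by
  rw [MvPolynomial.eval₂_monomial]
  refine wlow_C_mul c ?_
  rw [Finsupp.prod]
  have h := wlow_prod e.support (fun i => a i ^ e i) (fun i => e i) (fun i _ => by
    simpa using (ha i).pow (e i))
  exact fun d hd => h d (by simpa [wt, Finsupp.sum] using hd)

lemma coeff_eval₂_of_wlow (ha : ∀ i, Wlow 1 (a i)) {W : ℕ} {P : MvPolynomial (Fin k) R}
    (hP : ∀ e, wt e ≤ W → MvPolynomial.coeff e P = 0)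
    (d : τ →₀ ℕ) (hd : wt d ≤ W) :
    coeff d (MvPolynomial.eval₂ ((C : R →+* MvPowerSeries τ R)) a P) = 0 := by
  conv_lhs => rw [P.as_sum]
  rw [← MvPolynomial.coe_eval₂Hom, map_sum, map_sum]
  refine Finset.sum_eq_zero fun e he => ?_
  by_cases hw : wt e ≤ W
  · rw [MvPolynomial.coe_eval₂Hom, hP e hw]; simp
  · exact wlow_eval₂_monomial ha e _ d (by omega)

lemma coeff_eq_apply (f : MvPowerSeries τ R) (d : τ →₀ ℕ) : coeff d f = f d := rfl

lemma pcoeff_eq (f : PowerSeries R) (n : ℕ) :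
    PowerSeries.coeff n f = coeff (Finsupp.single () n) f := rfl

lemma coeff_msubst (a : Fin k → MvPowerSeries τ R) (f : MvPowerSeries (Fin k) R) (d : τ →₀ ℕ) :
    coeff d (msubst a f)
      = coeff d (MvPolynomial.eval₂ ((C : R →+* MvPowerSeries τ R)) a
          (trunc R (Finsupp.equivFunOnFinite.symm fun _ => wt d + 1) f)) := by
  have h1 : msubst a f = fun d => coeff d (MvPolynomial.eval₂ ((C : R →+* MvPowerSeries τ R)) a
      (trunc R (Finsupp.equivFunOnFinite.symm fun _ => wt d + 1) f)) := rfl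
  conv_lhs => rw [coeff_eq_apply, h1]

lemma coeff_psubst (c : MvPowerSeries τ R) (f : PowerSeries R) (d : τ →₀ ℕ) :
    coeff d (psubst c f)
      = coeff d (Polynomial.eval₂ ((C : R →+* MvPowerSeries τ R)) c (PowerSeries.trunc (wt d + 1) f)) := by
  have h1 : psubst c f = fun d => coeff d
      (Polynomial.eval₂ ((C : R →+* MvPowerSeries τ R)) c (PowerSeries.trunc (wt d + 1) f)) := rfl
  conv_lhs => rw [coeff_eq_apply, h1]

lemma lt_bound (hk : 0 < k) {e : Fin k →₀ ℕ} {n : ℕ} (he : wt e < n) :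
    e < Finsupp.equivFunOnFinite.symm (fun _ => n) := by
  rw [lt_iff_le_and_ne]
  refine ⟨Finsupp.le_def.mpr fun i => ?_, fun hle => ?_⟩
  · exact le_trans (le_wt e i) (le_of_lt he)
  · have h1 : e ⟨0, hk⟩ = (Finsupp.equivFunOnFinite.symm fun _ => n : Fin k →₀ ℕ) ⟨0, hk⟩ := by
      rw [hle]
    have h2 : (Finsupp.equivFunOnFinite.symm fun _ => n : Fin k →₀ ℕ) ⟨0, hk⟩ = n := rfl
    have := le_wt e ⟨0, hk⟩
    omega

lemma coeff_msubst_eq (hk : 0 < k) (ha : ∀ i, Wlow 1 (a i)) (f : MvPowerSeries (Fin k) R)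
    (d : τ →₀ ℕ) (P : MvPolynomial (Fin k) R)
    (hP : ∀ e, wt e ≤ wt d → MvPolynomial.coeff e P = coeff e f) :
    coeff d (msubst a f) = coeff d (MvPolynomial.eval₂ ((C : R →+* MvPowerSeries τ R)) a P) := by
  rw [coeff_msubst]
  have key : ∀ e, wt e ≤ wt d → MvPolynomial.coeff e
      (trunc R (Finsupp.equivFunOnFinite.symm fun _ => wt d + 1) f - P) = 0 := by
    intro e he
    rw [MvPolynomial.coeff_sub, coeff_trunc, if_pos (lt_bound hk (by omega)), hP e he, sub_self]
  have h0 := coeff_eval₂_of_wlow ha key d le_rfl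
  rw [MvPolynomial.eval₂_sub, map_sub, sub_eq_zero] at h0
  exact h0

lemma coeff_peval₂_of_wlow {c : MvPowerSeries τ R} (hc : Wlow 1 c) {W : ℕ} {P : Polynomial R}
    (hP : ∀ n, n ≤ W → P.coeff n = 0)
    (d : τ →₀ ℕ) (hd : wt d ≤ W) :
    coeff d (Polynomial.eval₂ ((C : R →+* MvPowerSeries τ R)) c P) = 0 := by
  rw [Polynomial.eval₂_eq_sum, Polynomial.sum, map_sum]
  refine Finset.sum_eq_zero fun n hn => ?_
  by_cases h : n ≤ W
  · rw [hP n h]; simp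
  · exact wlow_C_mul _ (by simpa using hc.pow n) d (by omega)

lemma coeff_psubst_eq {c : MvPowerSeries τ R} (hc : Wlow 1 c) (f : PowerSeries R)
    (d : τ →₀ ℕ) (P : Polynomial R)
    (hP : ∀ n, n ≤ wt d → P.coeff n = PowerSeries.coeff n f) :
    coeff d (psubst c f) = coeff d (Polynomial.eval₂ ((C : R →+* MvPowerSeries τ R)) c P) := by
  rw [coeff_psubst]
  have key : ∀ n, n ≤ wt d →
      (PowerSeries.trunc (wt d + 1) f - P).coeff n = 0 := by
    intro n hn
    rw [Polynomial.coeff_sub, PowerSeries.coeff_trunc, if_pos (by omega), hP n hn, sub_self]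
  have h0 := coeff_peval₂_of_wlow hc key d le_rfl
  rw [Polynomial.eval₂_sub, map_sub, sub_eq_zero] at h0
  exact h0

lemma wlow_msubst {W : ℕ} {f : MvPowerSeries (Fin k) R} (ha : ∀ i, Wlow 1 (a i))
    (hf : Wlow W f) : Wlow W (msubst a f) := by
  intro d hd
  rw [coeff_msubst]
  refine coeff_eval₂_of_wlow ha (W := wt d) (fun e he => ?_) d le_rfl
  rw [coeff_trunc]
  split_ifs with h
  · exact hf e (by omega)
  · rfl

lemma wlow_psubst {W : ℕ} {c : MvPowerSeries τ R} {f : PowerSeries R} (hc : Wlow 1 c)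
    (hf : Wlow W f) : Wlow W (psubst c f) := by
  intro d hd
  rw [coeff_psubst]
  refine coeff_peval₂_of_wlow hc (W := wt d) (fun n hn => ?_) d le_rfl
  rw [PowerSeries.coeff_trunc]
  split_ifs with h
  · rw [pcoeff_eq]
    exact hf _ (by rw [wt_single]; omega)
  · rfl

lemma msubst_coe (hk : 0 < k) (ha : ∀ i, Wlow 1 (a i)) (P : MvPolynomial (Fin k) R) :
    msubst a (↑P : MvPowerSeries (Fin k) R) = MvPolynomial.eval₂ ((C : R →+* MvPowerSeries τ R)) a P :=
  MvPowerSeries.ext fun d =>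
    coeff_msubst_eq hk ha _ d P (fun e _ => (MvPolynomial.coeff_coe P e).symm)

lemma msubst_C (hk : 0 < k) (ha : ∀ i, Wlow 1 (a i)) (c : R) :
    msubst a ((C : R →+* MvPowerSeries (Fin k) R) c) = (C : R →+* MvPowerSeries τ R) c := by
  rw [← MvPolynomial.coe_C, msubst_coe hk ha, MvPolynomial.eval₂_C]

lemma msubst_one (hk : 0 < k) (ha : ∀ i, Wlow 1 (a i)) :
    msubst a (1 : MvPowerSeries (Fin k) R) = 1 := by
  rw [← MvPolynomial.coe_one, msubst_coe hk ha, MvPolynomial.eval₂_one]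

lemma msubst_X (hk : 0 < k) (ha : ∀ i, Wlow 1 (a i)) (i : Fin k) :
    msubst a (X i : MvPowerSeries (Fin k) R) = a i := by
  rw [← MvPolynomial.coe_X, msubst_coe hk ha, MvPolynomial.eval₂_X]

lemma msubst_add (f g : MvPowerSeries (Fin k) R) :
    msubst a (f + g) = msubst a f + msubst a g := by
  refine MvPowerSeries.ext fun d => ?_
  rw [map_add, coeff_msubst, coeff_msubst, coeff_msubst, map_add (trunc R _),
    MvPolynomial.eval₂_add, map_add]

lemma msubst_zero : msubst a (0 : MvPowerSeries (Fin k) R) = 0 := by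
  refine MvPowerSeries.ext fun d => ?_
  rw [coeff_msubst, map_zero (trunc R _), MvPolynomial.eval₂_zero]


lemma msubst_neg (f : MvPowerSeries (Fin k) R) : msubst a (-f) = - msubst a f := by
  have h : msubst a (-f) + msubst a f = 0 := by
    rw [← msubst_add, neg_add_cancel, msubst_zero]
  rw [eq_neg_iff_add_eq_zero]
  exact h

lemma msubst_mul (hk : 0 < k) (ha : ∀ i, Wlow 1 (a i)) (f g : MvPowerSeries (Fin k) R) :
    msubst a (f * g) = msubst a f * msubst a g := by
  classical
  refine MvPowerSeries.ext fun d => ?_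
  have agreef : ∀ e : Fin k →₀ ℕ, wt e ≤ wt d → MvPolynomial.coeff e
      (trunc R (Finsupp.equivFunOnFinite.symm fun _ => wt d + 1) f) = coeff e f := by
    intro e he
    rw [coeff_trunc, if_pos (lt_bound hk (by omega))]
  have agreeg : ∀ e : Fin k →₀ ℕ, wt e ≤ wt d → MvPolynomial.coeff e
      (trunc R (Finsupp.equivFunOnFinite.symm fun _ => wt d + 1) g) = coeff e g := by
    intro e he
    rw [coeff_trunc, if_pos (lt_bound hk (by omega))]
  rw [coeff_msubst_eq hk ha (f * g) d
      (trunc R (Finsupp.equivFunOnFinite.symm fun _ => wt d + 1) f *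
       trunc R (Finsupp.equivFunOnFinite.symm fun _ => wt d + 1) g)
      (fun e he => by
        rw [MvPolynomial.coeff_mul, coeff_mul]
        refine Finset.sum_congr rfl fun p hp => ?_
        rw [Finset.HasAntidiagonal.mem_antidiagonal] at hp
        have hw : wt p.1 + wt p.2 = wt e := by rw [← wt_add, hp]
        rw [agreef p.1 (by omega), agreeg p.2 (by omega)])]
  rw [MvPolynomial.eval₂_mul, coeff_mul, coeff_mul]
  refine Finset.sum_congr rfl fun p hp => ?_
  rw [Finset.HasAntidiagonal.mem_antidiagonal] at hp
  have hw : wt p.1 + wt p.2 = wt d := by rw [← wt_add, hp]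
  rw [coeff_msubst_eq hk ha f p.1 _ (fun e he => agreef e (by omega)),
    coeff_msubst_eq hk ha g p.2 _ (fun e he => agreeg e (by omega))]

lemma msubst_pow (hk : 0 < k) (ha : ∀ i, Wlow 1 (a i)) (f : MvPowerSeries (Fin k) R) (n : ℕ) :
    msubst a (f ^ n) = msubst a f ^ n := by
  induction n with
  | zero => rw [pow_zero, pow_zero, msubst_one hk ha]
  | succ n ih => rw [pow_succ, pow_succ, msubst_mul hk ha, ih]

lemma msubst_sub (f g : MvPowerSeries (Fin k) R) :
    msubst a (f - g) = msubst a f - msubst a g := by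
  rw [sub_eq_add_neg, sub_eq_add_neg, msubst_add, msubst_neg]

variable {c : MvPowerSeries τ R}

lemma psubst_coe (hc : Wlow 1 c) (P : Polynomial R) :
    psubst c (↑P : PowerSeries R) = Polynomial.eval₂ ((C : R →+* MvPowerSeries τ R)) c P :=
  MvPowerSeries.ext fun d =>
    coeff_psubst_eq hc _ d P (fun n _ => (Polynomial.coeff_coe P n).symm)

lemma psubst_C (hc : Wlow 1 c) (r : R) :
    psubst c (PowerSeries.C r) = (C : R →+* MvPowerSeries τ R) r := by
  rw [← Polynomial.coe_C, psubst_coe hc, Polynomial.eval₂_C]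

lemma psubst_one (hc : Wlow 1 c) : psubst c (1 : PowerSeries R) = 1 := by
  rw [← Polynomial.coe_one, psubst_coe hc, Polynomial.eval₂_one]

lemma psubst_X (hc : Wlow 1 c) : psubst c (PowerSeries.X : PowerSeries R) = c := by
  rw [← Polynomial.coe_X, psubst_coe hc, Polynomial.eval₂_X]

lemma psubst_add (f g : PowerSeries R) :
    psubst c (f + g) = psubst c f + psubst c g := by
  refine MvPowerSeries.ext fun d => ?_
  rw [map_add, coeff_psubst, coeff_psubst, coeff_psubst, map_add (PowerSeries.trunc (wt d + 1)),
    Polynomial.eval₂_add, map_add]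

lemma psubst_zero : psubst c (0 : PowerSeries R) = 0 := by
  refine MvPowerSeries.ext fun d => ?_
  rw [coeff_psubst, map_zero (PowerSeries.trunc (wt d + 1)), Polynomial.eval₂_zero]

lemma psubst_neg (f : PowerSeries R) : psubst c (-f) = - psubst c f := by
  have h : psubst c (-f) + psubst c f = 0 := by
    rw [← psubst_add, neg_add_cancel, psubst_zero]
  rw [eq_neg_iff_add_eq_zero]
  exact h

lemma psubst_mul (hc : Wlow 1 c) (f g : PowerSeries R) :
    psubst c (f * g) = psubst c f * psubst c g := by
  classical
  refine MvPowerSeries.ext fun d => ?_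
  have agreef : ∀ n : ℕ, n ≤ wt d →
      (PowerSeries.trunc (wt d + 1) f).coeff n = PowerSeries.coeff n f := by
    intro n hn
    rw [PowerSeries.coeff_trunc, if_pos (by omega)]
  have agreeg : ∀ n : ℕ, n ≤ wt d →
      (PowerSeries.trunc (wt d + 1) g).coeff n = PowerSeries.coeff n g := by
    intro n hn
    rw [PowerSeries.coeff_trunc, if_pos (by omega)]
  rw [coeff_psubst_eq hc (f * g) d
      (PowerSeries.trunc (wt d + 1) f * PowerSeries.trunc (wt d + 1) g)
      (fun n hn => by
        rw [Polynomial.coeff_mul, PowerSeries.coeff_mul]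
        refine Finset.sum_congr rfl fun p hp => ?_
        rw [Finset.HasAntidiagonal.mem_antidiagonal] at hp
        rw [agreef p.1 (by omega), agreeg p.2 (by omega)])]
  rw [Polynomial.eval₂_mul, coeff_mul, coeff_mul]
  refine Finset.sum_congr rfl fun p hp => ?_
  rw [Finset.HasAntidiagonal.mem_antidiagonal] at hp
  have hw : wt p.1 + wt p.2 = wt d := by rw [← wt_add, hp]
  rw [coeff_psubst_eq hc f p.1 _ (fun n hn => agreef n (by omega)),
    coeff_psubst_eq hc g p.2 _ (fun n hn => agreeg n (by omega))]

lemma psubst_pow (hc : Wlow 1 c) (f : PowerSeries R) (n : ℕ) :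
    psubst c (f ^ n) = psubst c f ^ n := by
  induction n with
  | zero => rw [pow_zero, pow_zero, psubst_one hc]
  | succ n ih => rw [pow_succ, pow_succ, psubst_mul hc, ih]

section Comp

variable {R : Type*} [CommRing R] {k l : ℕ} {τ : Type*}
variable {b : Fin l → MvPowerSeries τ R}

lemma msubst_eval₂ (hl : 0 < l) (hb : ∀ j, Wlow 1 (b j))
    (a : Fin k → MvPowerSeries (Fin l) R) (P : MvPolynomial (Fin k) R) :
    msubst b (MvPolynomial.eval₂ ((C : R →+* MvPowerSeries (Fin l) R)) a P)
      = MvPolynomial.eval₂ ((C : R →+* MvPowerSeries τ R)) (fun i => msubst b (a i)) P := by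
  induction P using MvPolynomial.induction_on with
  | C c => rw [MvPolynomial.eval₂_C, MvPolynomial.eval₂_C, msubst_C hl hb]
  | add p q hp hq => rw [MvPolynomial.eval₂_add, MvPolynomial.eval₂_add, msubst_add, hp, hq]
  | mul_X p i hp =>
      rw [MvPolynomial.eval₂_mul, MvPolynomial.eval₂_mul, MvPolynomial.eval₂_X,
        MvPolynomial.eval₂_X, msubst_mul hl hb, hp]

lemma msubst_peval₂ (hl : 0 < l) (hb : ∀ j, Wlow 1 (b j))
    (c : MvPowerSeries (Fin l) R) (P : Polynomial R) :
    msubst b (Polynomial.eval₂ ((C : R →+* MvPowerSeries (Fin l) R)) c P)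
      = Polynomial.eval₂ ((C : R →+* MvPowerSeries τ R)) (msubst b c) P := by
  induction P using Polynomial.induction_on' with
  | add p q hp hq => rw [Polynomial.eval₂_add, Polynomial.eval₂_add, msubst_add, hp, hq]
  | monomial n r =>
      rw [Polynomial.eval₂_monomial, Polynomial.eval₂_monomial, msubst_mul hl hb,
        msubst_C hl hb, msubst_pow hl hb]

lemma psubst_eval₂ {c : MvPowerSeries τ R} (hc : Wlow 1 c)
    (a : Fin k → PowerSeries R) (P : MvPolynomial (Fin k) R) :
    psubst c (MvPolynomial.eval₂ ((C : R →+* MvPowerSeries Unit R)) a P)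
      = MvPolynomial.eval₂ ((C : R →+* MvPowerSeries τ R)) (fun i => psubst c (a i)) P := by
  induction P using MvPolynomial.induction_on with
  | C r =>
      rw [MvPolynomial.eval₂_C, MvPolynomial.eval₂_C,
        show ((C : R →+* MvPowerSeries Unit R) r : PowerSeries R) = PowerSeries.C r from rfl, psubst_C hc]
  | add p q hp hq => rw [MvPolynomial.eval₂_add, MvPolynomial.eval₂_add, psubst_add, hp, hq]
  | mul_X p i hp =>
      rw [MvPolynomial.eval₂_mul, MvPolynomial.eval₂_mul, MvPolynomial.eval₂_X,
        MvPolynomial.eval₂_X, psubst_mul hc, hp]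

lemma msubst_msubst (hk : 0 < k) (hl : 0 < l)
    {a : Fin k → MvPowerSeries (Fin l) R} (ha : ∀ i, Wlow 1 (a i))
    (hb : ∀ j, Wlow 1 (b j)) (f : MvPowerSeries (Fin k) R) :
    msubst b (msubst a f) = msubst (fun i => msubst b (a i)) f := by
  refine MvPowerSeries.ext fun d => ?_
  have hWl : Wlow (wt d + 1) (msubst a f - MvPolynomial.eval₂ ((C : R →+* MvPowerSeries (Fin l) R)) a
      (trunc R (Finsupp.equivFunOnFinite.symm fun _ => wt d + 1) f)) := by
    intro d' hd'
    rw [map_sub, coeff_msubst_eq hk ha f d'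
      (trunc R (Finsupp.equivFunOnFinite.symm fun _ => wt d + 1) f)
      (fun e he => by rw [coeff_trunc, if_pos (lt_bound hk (by omega))]), sub_self]
  have hsplit : msubst a f = MvPolynomial.eval₂ ((C : R →+* MvPowerSeries (Fin l) R)) a
      (trunc R (Finsupp.equivFunOnFinite.symm fun _ => wt d + 1) f)
      + (msubst a f - MvPolynomial.eval₂ ((C : R →+* MvPowerSeries (Fin l) R)) a
      (trunc R (Finsupp.equivFunOnFinite.symm fun _ => wt d + 1) f)) := by
    rw [add_sub_cancel]
  rw [hsplit, msubst_add, map_add, wlow_msubst hb hWl d (by omega), add_zero,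
    msubst_eval₂ hl hb, coeff_msubst]

lemma msubst_psubst (hl : 0 < l)
    {c : MvPowerSeries (Fin l) R} (hc : Wlow 1 c)
    (hb : ∀ j, Wlow 1 (b j)) (f : PowerSeries R) :
    msubst b (psubst c f) = psubst (msubst b c) f := by
  refine MvPowerSeries.ext fun d => ?_
  have hWl : Wlow (wt d + 1) (psubst c f - Polynomial.eval₂ ((C : R →+* MvPowerSeries (Fin l) R)) c
      (PowerSeries.trunc (wt d + 1) f)) := by
    intro d' hd'
    rw [map_sub, coeff_psubst_eq hc f d'
      (PowerSeries.trunc (wt d + 1) f)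
      (fun n hn => by rw [PowerSeries.coeff_trunc, if_pos (by omega)]), sub_self]
  have hsplit : psubst c f = Polynomial.eval₂ ((C : R →+* MvPowerSeries (Fin l) R)) c (PowerSeries.trunc (wt d + 1) f)
      + (psubst c f - Polynomial.eval₂ ((C : R →+* MvPowerSeries (Fin l) R)) c (PowerSeries.trunc (wt d + 1) f)) := by
    rw [add_sub_cancel]
  rw [hsplit, msubst_add, map_add, wlow_msubst hb hWl d (by omega), add_zero,
    msubst_peval₂ hl hb, coeff_psubst]

lemma psubst_msubst (hk : 0 < k)
    {c : MvPowerSeries τ R} (hc : Wlow 1 c)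
    {a : Fin k → PowerSeries R} (ha : ∀ i, Wlow 1 (a i)) (f : MvPowerSeries (Fin k) R) :
    psubst c (msubst a f) = msubst (fun i => psubst c (a i)) f := by
  refine MvPowerSeries.ext fun d => ?_
  have hWl : Wlow (wt d + 1) (msubst a f - MvPolynomial.eval₂ ((C : R →+* MvPowerSeries Unit R)) a
      (trunc R (Finsupp.equivFunOnFinite.symm fun _ => wt d + 1) f)) := by
    intro d' hd'
    rw [map_sub, coeff_msubst_eq hk ha f d'
      (trunc R (Finsupp.equivFunOnFinite.symm fun _ => wt d + 1) f)
      (fun e he => by rw [coeff_trunc, if_pos (lt_bound hk (by omega))]), sub_self]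
  have hsplit : msubst a f = MvPolynomial.eval₂ ((C : R →+* MvPowerSeries Unit R)) a
      (trunc R (Finsupp.equivFunOnFinite.symm fun _ => wt d + 1) f)
      + (msubst a f - MvPolynomial.eval₂ ((C : R →+* MvPowerSeries Unit R)) a
      (trunc R (Finsupp.equivFunOnFinite.symm fun _ => wt d + 1) f)) := by
    rw [add_sub_cancel]
  rw [hsplit, psubst_add, map_add, wlow_psubst hc hWl d (by omega), add_zero,
    psubst_eval₂ hc, coeff_msubst]

end Comp

section App

variable {R : Type*} [CommRing R] {τ : Type*}

lemma wlow_all (f : MvPowerSeries τ R) : Wlow 0 f := fun _ hd => absurd hd (by omega)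

lemma wt_fin2 (d : Fin 2 →₀ ℕ) : wt d = d 0 + d 1 := by
  rw [wt, Finsupp.sum_fintype _ _ (fun _ => rfl), Fin.sum_univ_two]

lemma fin2_cases {d : Fin 2 →₀ ℕ} (hd : wt d < 2) :
    d = 0 ∨ d = Finsupp.single 0 1 ∨ d = Finsupp.single 1 1 := by
  rw [wt_fin2] at hd
  rcases Nat.lt_or_ge (d 0) 1 with h0 | h0
  · rcases Nat.lt_or_ge (d 1) 1 with h1 | h1
    · left
      ext i
      fin_cases i <;> simp <;> omega
    · right; right
      ext i
      fin_cases i <;> simp [Finsupp.single_apply] <;> omega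
  · right; left
    ext i
    fin_cases i <;> simp [Finsupp.single_apply] <;> omega

lemma single_ne_zero' (i : τ) : (Finsupp.single i 1 : τ →₀ ℕ) ≠ 0 := by
  simp [Finsupp.single_eq_zero]

lemma decomp (F : MvPowerSeries (Fin 2) R) :
    Wlow 2 (F - ((C : R →+* MvPowerSeries (Fin 2) R) (coeff 0 F)
      + (C : R →+* MvPowerSeries (Fin 2) R) (coeff (Finsupp.single 0 1) F) * X 0
      + (C : R →+* MvPowerSeries (Fin 2) R) (coeff (Finsupp.single 1 1) F) * X 1)) := by
  classical
  intro d hd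
  rw [map_sub, map_add, map_add, coeff_C_mul, coeff_C_mul, coeff_X, coeff_X, MvPowerSeries.coeff_C]
  rcases fin2_cases hd with h | h | h <;> subst h <;>
    simp [Finsupp.single_eq_single_iff, (single_ne_zero' (0 : Fin 2)).symm,
      (single_ne_zero' (1 : Fin 2)).symm, single_ne_zero']

lemma coeff_msubst_low {a : Fin 2 → MvPowerSeries τ R} (ha : ∀ i, Wlow 1 (a i))
    (F : MvPowerSeries (Fin 2) R) (d : τ →₀ ℕ) (hd : wt d < 2) :
    coeff d (msubst a F) = coeff d ((C : R →+* MvPowerSeries τ R) (coeff 0 F)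
      + (C : R →+* MvPowerSeries τ R) (coeff (Finsupp.single 0 1) F) * a 0
      + (C : R →+* MvPowerSeries τ R) (coeff (Finsupp.single 1 1) F) * a 1) := by
  have two_pos : 0 < 2 := by omega
  have hsplit : F = ((C : R →+* MvPowerSeries (Fin 2) R) (coeff 0 F)
      + (C : R →+* MvPowerSeries (Fin 2) R) (coeff (Finsupp.single 0 1) F) * X 0
      + (C : R →+* MvPowerSeries (Fin 2) R) (coeff (Finsupp.single 1 1) F) * X 1)
      + (F - ((C : R →+* MvPowerSeries (Fin 2) R) (coeff 0 F)
      + (C : R →+* MvPowerSeries (Fin 2) R) (coeff (Finsupp.single 0 1) F) * X 0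
      + (C : R →+* MvPowerSeries (Fin 2) R) (coeff (Finsupp.single 1 1) F) * X 1)) := by ring
  conv_lhs => rw [hsplit]
  rw [msubst_add, msubst_add, msubst_add, msubst_mul two_pos ha, msubst_mul two_pos ha,
    msubst_C two_pos ha, msubst_C two_pos ha, msubst_C two_pos ha,
    msubst_X two_pos ha, msubst_X two_pos ha,
    map_add, wlow_msubst ha (decomp F) d hd, add_zero]

lemma coeff_psubst_range (c : MvPowerSeries τ R) (f : PowerSeries R) (d : τ →₀ ℕ) :
    coeff d (psubst c f)
      = ∑ i ∈ Finset.range (wt d + 1), PowerSeries.coeff i f * coeff d (c ^ i) := by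
  rw [coeff_psubst, PowerSeries.eval₂_trunc_eq_sum_range, map_sum]
  refine Finset.sum_congr rfl fun i _ => ?_
  rw [coeff_C_mul]

lemma psubst_X_self (f : PowerSeries R) : psubst (PowerSeries.X : PowerSeries R) f = f := by
  refine MvPowerSeries.ext fun d => ?_
  have hd : d = Finsupp.single () (d ()) := Finsupp.unique_single d
  rw [hd]
  generalize d () = n
  rw [coeff_psubst_range, wt_single]
  rw [Finset.sum_eq_single n]
  · rw [show coeff (Finsupp.single () n) ((PowerSeries.X : PowerSeries R) ^ n) = 1 from by
      rw [← pcoeff_eq, PowerSeries.coeff_X_pow, if_pos rfl], mul_one, ← pcoeff_eq]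
  · intro i _ hi
    rw [show coeff (Finsupp.single () n) ((PowerSeries.X : PowerSeries R) ^ i) = 0 from by
      rw [← pcoeff_eq, PowerSeries.coeff_X_pow, if_neg (Ne.symm hi)], mul_zero]
  · intro h
    exact absurd (Finset.self_mem_range_succ n) h

lemma pow_approx {g : PowerSeries R} (hg2 : Wlow 2 g)
    (hgd : Wlow 3 (g - PowerSeries.X ^ 2)) (n : ℕ) :
    Wlow (2 * n + 1) (g ^ n - (PowerSeries.X : PowerSeries R) ^ (2 * n)) := by
  induction n with
  | zero => intro d hd; rw [mul_zero, pow_zero, pow_zero, sub_self, map_zero]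
  | succ n ih =>
      have hkey : g ^ (n + 1) - (PowerSeries.X : PowerSeries R) ^ (2 * (n + 1))
          = g ^ n * (g - PowerSeries.X ^ 2)
            + (g ^ n - PowerSeries.X ^ (2 * n)) * PowerSeries.X ^ 2 := by
        rw [show 2 * (n + 1) = 2 * n + 2 by ring, pow_add, pow_succ]
        ring
      rw [hkey]
      have h1 : Wlow (2 * n + 3) (g ^ n * (g - PowerSeries.X ^ 2)) :=
        Wlow.mono (le_of_eq (by ring)) ((Wlow.mono (le_of_eq (mul_comm 2 n)) (hg2.pow n)).mul hgd)
      have h2 : Wlow (2 * n + 3) ((g ^ n - PowerSeries.X ^ (2 * n)) * PowerSeries.X ^ 2) := by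
        have hX2 : Wlow 2 ((PowerSeries.X : PowerSeries R) ^ 2) := by
          have := (wlow_X (τ := Unit) (R := R) ()).pow 2
          exact Wlow.mono (le_of_eq (by ring)) this
        exact Wlow.mono (le_of_eq (by ring)) (ih.mul hX2)
      exact Wlow.mono (le_of_eq (by ring)) (h1.add h2)

end App

end

/-- If `H₂ ∈ R[[U,V]]` is the unique power series with
`H₂(−X·ι(X), −Y·ι(Y)) = F(X,Y)·F(ι(X),ι(Y))·F(ι(X),Y)·F(X,ι(Y))`, then the diagonal
substitution of `H₂` vanishes: `H₂(U,U) = 0` in `R[[U]]`. -/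
theorem stmt_6 {R : Type*} [CommRing R] (F : MvPowerSeries (Fin 2) R) (hF : IsFGL F)
    (ι : PowerSeries R) (hι : IsFormalInverse F ι)
    (H₂ : MvPowerSeries (Fin 2) R)
    (hH₂ : msubst ![-(MvPowerSeries.X 0 * iX ι), -(MvPowerSeries.X 1 * iY ι)] H₂
        = F * msubst ![iX ι, iY ι] F
            * (msubst ![iX ι, MvPowerSeries.X 1] F * msubst ![MvPowerSeries.X 0, iY ι] F)) :
    msubst ![(PowerSeries.X : PowerSeries R), PowerSeries.X] H₂ = 0 := by
  classical
  obtain ⟨hι0, hιF⟩ := hι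
  have two_pos : (0:ℕ) < 2 := by omega
  have hιW : Wlow 1 ι := wlow_of_constantCoeff hι0
  have hXW : Wlow 1 (PowerSeries.X : PowerSeries R) :=
    wlow_of_constantCoeff PowerSeries.constantCoeff_X
  -- coefficients of F
  have haR : ∀ i : Fin 2,
      Wlow 1 ((![MvPowerSeries.X 0, 0] : Fin 2 → MvPowerSeries (Fin 2) R) i) := by
    intro i; fin_cases i
    · simpa using wlow_X (0 : Fin 2)
    · simpa using wlow_zero (R := R) (τ := Fin 2) 1
  have haL : ∀ i : Fin 2,
      Wlow 1 ((![0, MvPowerSeries.X 1] : Fin 2 → MvPowerSeries (Fin 2) R) i) := by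
    intro i; fin_cases i
    · simpa using wlow_zero (R := R) (τ := Fin 2) 1
    · simpa using wlow_X (1 : Fin 2)
  have haι : ∀ i : Fin 2,
      Wlow 1 ((![(PowerSeries.X : PowerSeries R), ι]) i) := by
    intro i; fin_cases i
    · simpa using hXW
    · simpa using hιW
  have hF00 : MvPowerSeries.coeff (0 : Fin 2 →₀ ℕ) F = 0 := by
    have h := congrArg (MvPowerSeries.coeff (0 : Fin 2 →₀ ℕ)) hF.zero_right
    rw [coeff_msubst_low haR F 0 (by rw [wt_zero]; omega)] at h
    simpa [MvPowerSeries.coeff_C, MvPowerSeries.coeff_C_mul, MvPowerSeries.coeff_X,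
      single_ne_zero', (single_ne_zero' (0 : Fin 2)).symm] using h
  have hF10 : MvPowerSeries.coeff (Finsupp.single (0 : Fin 2) 1) F = 1 := by
    have h := congrArg (MvPowerSeries.coeff (Finsupp.single (0 : Fin 2) 1)) hF.zero_right
    rw [coeff_msubst_low haR F _ (by rw [wt_single]; omega)] at h
    simpa [MvPowerSeries.coeff_C, MvPowerSeries.coeff_C_mul, MvPowerSeries.coeff_X,
      single_ne_zero', Finsupp.single_eq_single_iff] using h
  have hF01 : MvPowerSeries.coeff (Finsupp.single (1 : Fin 2) 1) F = 1 := by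
    have h := congrArg (MvPowerSeries.coeff (Finsupp.single (1 : Fin 2) 1)) hF.zero_left
    rw [coeff_msubst_low haL F _ (by rw [wt_single]; omega)] at h
    simpa [MvPowerSeries.coeff_C, MvPowerSeries.coeff_C_mul, MvPowerSeries.coeff_X,
      single_ne_zero', Finsupp.single_eq_single_iff] using h
  have hXc : MvPowerSeries.coeff (Finsupp.single () 1) (PowerSeries.X : PowerSeries R) = 1 := by
    rw [← pcoeff_eq, PowerSeries.coeff_one_X]
  have hι1 : PowerSeries.coeff 1 ι = -1 := by
    have h := congrArg (MvPowerSeries.coeff (Finsupp.single () 1)) hιF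
    rw [coeff_msubst_low haι F _ (by rw [wt_single]; omega)] at h
    rw [map_zero] at h
    simp only [Fin.mk_zero, Fin.mk_one, Matrix.cons_val_zero, Matrix.cons_val_one, Matrix.head_cons] at h
    rw [map_add, map_add, MvPowerSeries.coeff_C_mul, MvPowerSeries.coeff_C_mul, hF00, hF10, hF01, hXc,
      MvPowerSeries.coeff_C, if_neg (single_ne_zero' ()), ← pcoeff_eq] at h
    linear_combination h
  -- facts about g = -(X * ι)
  have hg2 : Wlow 2 (-(PowerSeries.X * ι) : PowerSeries R) := (hXW.mul hιW).neg
  have hg1 : Wlow 1 (-(PowerSeries.X * ι) : PowerSeries R) := Wlow.mono (by omega) hg2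
  have hgc2 : PowerSeries.coeff 2 (-(PowerSeries.X * ι)) = 1 := by
    rw [map_neg, show (2:ℕ) = 1 + 1 from rfl, PowerSeries.coeff_succ_X_mul, hι1, neg_neg]
  have hgd : Wlow 3 ((-(PowerSeries.X * ι)) - PowerSeries.X ^ 2 : PowerSeries R) := by
    intro d hd
    have hdu : d = Finsupp.single () (d ()) := Finsupp.unique_single d
    rw [hdu, wt_single] at hd
    rw [hdu, map_sub]
    generalize hnn : d () = n at hd ⊢
    have hXp : ∀ m : ℕ, MvPowerSeries.coeff (Finsupp.single () m) ((PowerSeries.X : PowerSeries R) ^ 2)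
        = if m = 2 then 1 else 0 := fun m => by rw [← pcoeff_eq, PowerSeries.coeff_X_pow]
    interval_cases n
    · rw [hg2 _ (by rw [wt_single]; omega), hXp 0, if_neg (by omega), sub_zero]
    · rw [hg2 _ (by rw [wt_single]; omega), hXp 1, if_neg (by omega), sub_zero]
    · rw [show MvPowerSeries.coeff (Finsupp.single () 2) (-(PowerSeries.X * ι) : PowerSeries R) = 1 from by
        rw [← pcoeff_eq]; exact hgc2, hXp 2, if_pos rfl, sub_self]
  have hpow := pow_approx hg2 hgd
  have hgpn : ∀ n : ℕ,
      MvPowerSeries.coeff (Finsupp.single () (2 * n)) ((-(PowerSeries.X * ι) : PowerSeries R) ^ n) = 1 := by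
    intro n
    have hsplit : (-(PowerSeries.X * ι) : PowerSeries R) ^ n
        = PowerSeries.X ^ (2 * n)
          + ((-(PowerSeries.X * ι) : PowerSeries R) ^ n - PowerSeries.X ^ (2 * n)) := by ring
    rw [hsplit, map_add, hpow n _ (by rw [wt_single]; omega), add_zero, ← pcoeff_eq,
      PowerSeries.coeff_X_pow, if_pos rfl]
  -- the substitution b = ![X, X]
  have hb : ∀ j : Fin 2,
      Wlow 1 ((![(PowerSeries.X : PowerSeries R), PowerSeries.X]) j) := by
    intro j; fin_cases j <;> simpa using hXW
  -- step A : substitute X,X into the defining equation of H₂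
  have hA : ∀ i : Fin 2, Wlow 1 ((![-(MvPowerSeries.X 0 * iX ι),
      -(MvPowerSeries.X 1 * iY ι)] : Fin 2 → MvPowerSeries (Fin 2) R) i) := by
    intro i; fin_cases i
    · simpa using ((wlow_X (0 : Fin 2) (R := R)).mul (wlow_all (iX ι))).neg
    · simpa using ((wlow_X (1 : Fin 2) (R := R)).mul (wlow_all (iY ι))).neg
  have hstep := congrArg (msubst ![(PowerSeries.X : PowerSeries R), PowerSeries.X]) hH₂
  rw [msubst_msubst two_pos two_pos hA hb H₂] at hstep
  have hfun : (fun i => msubst ![(PowerSeries.X : PowerSeries R), PowerSeries.X]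
      ((![-(MvPowerSeries.X 0 * iX ι), -(MvPowerSeries.X 1 * iY ι)]) i))
      = ![-(PowerSeries.X * ι), -(PowerSeries.X * ι)] := by
    funext i
    fin_cases i
    · simp only [Fin.mk_zero, Fin.mk_one, Matrix.cons_val_zero]
      rw [msubst_neg, msubst_mul two_pos hb]
      unfold iX
      rw [msubst_psubst two_pos (wlow_X 0) hb, msubst_X two_pos hb]
      simp only [Fin.mk_zero, Fin.mk_one, Matrix.cons_val_zero]
      rw [psubst_X_self]
    · simp only [Fin.mk_zero, Fin.mk_one, Matrix.cons_val_one, Matrix.head_cons, Matrix.cons_val_zero]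
      rw [msubst_neg, msubst_mul two_pos hb]
      unfold iY
      rw [msubst_psubst two_pos (wlow_X 1) hb, msubst_X two_pos hb]
      simp only [Fin.mk_zero, Fin.mk_one, Matrix.cons_val_one, Matrix.head_cons, Matrix.cons_val_zero]
      rw [psubst_X_self]
  rw [hfun] at hstep
  -- right-hand side: it contains the factor F(X, ι(X)) = 0
  have hXiY : ∀ i : Fin 2, Wlow 1 ((![MvPowerSeries.X 0, iY ι] :
      Fin 2 → MvPowerSeries (Fin 2) R) i) := by
    intro i; fin_cases i
    · simpa using wlow_X (0 : Fin 2) (R := R)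
    · simpa [iY] using (wlow_psubst (wlow_X 1) hιW : Wlow 1 (iY ι))
  rw [msubst_mul two_pos hb, msubst_mul two_pos hb, msubst_mul two_pos hb,
    msubst_msubst two_pos two_pos hXiY hb F] at hstep
  have hfun2 : (fun i => msubst ![(PowerSeries.X : PowerSeries R), PowerSeries.X]
      ((![MvPowerSeries.X 0, iY ι]) i)) = ![(PowerSeries.X : PowerSeries R), ι] := by
    funext i
    fin_cases i
    · simp only [Fin.mk_zero, Fin.mk_one, Matrix.cons_val_zero]
      rw [msubst_X two_pos hb]
      simp only [Fin.mk_zero, Fin.mk_one, Matrix.cons_val_zero]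
    · simp only [Fin.mk_zero, Fin.mk_one, Matrix.cons_val_one, Matrix.head_cons, Matrix.cons_val_zero]
      unfold iY
      rw [msubst_psubst two_pos (wlow_X 1) hb, msubst_X two_pos hb]
      simp only [Fin.mk_zero, Fin.mk_one, Matrix.cons_val_one, Matrix.head_cons, Matrix.cons_val_zero]
      rw [psubst_X_self]
  rw [hfun2, hιF, mul_zero, mul_zero] at hstep
  -- step B: compose with the diagonal
  have hcomp := psubst_msubst two_pos hg1 hb H₂
  have hfun3 : (fun i => psubst (-(PowerSeries.X * ι))
      ((![(PowerSeries.X : PowerSeries R), PowerSeries.X]) i))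
      = ![(-(PowerSeries.X * ι) : PowerSeries R), -(PowerSeries.X * ι)] := by
    funext i
    fin_cases i <;> simp only [Fin.mk_zero, Fin.mk_one, Matrix.cons_val_zero, Matrix.cons_val_one, Matrix.head_cons] <;>
      exact psubst_X hg1
  rw [hfun3, hstep] at hcomp
  -- step C: the substitution by g is injective enough
  have main : ∀ n : ℕ, PowerSeries.coeff n
      (msubst ![(PowerSeries.X : PowerSeries R), PowerSeries.X] H₂) = 0 := by
    intro n
    induction n using Nat.strong_induction_on with
    | _ n ih =>
      have h0 := congrArg (MvPowerSeries.coeff (Finsupp.single () (2 * n))) hcomp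
      rw [map_zero, coeff_psubst_range, wt_single] at h0
      rw [Finset.sum_eq_single n] at h0
      · rw [hgpn n, mul_one] at h0
        exact h0
      · intro i hi hne
        rcases lt_or_gt_of_ne hne with hlt | hgt
        · rw [ih i hlt, zero_mul]
        · rw [show MvPowerSeries.coeff (Finsupp.single () (2 * n))
              ((-(PowerSeries.X * ι) : PowerSeries R) ^ i) = 0 from
            (hg2.pow i) _ (by rw [wt_single]; omega), mul_zero]
      · intro h
        exact absurd (Finset.mem_range.mpr (by omega)) h
  refine MvPowerSeries.ext fun d => ?_
  rw [map_zero]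
  have h := main (d ())
  rw [pcoeff_eq] at h
  rw [Finsupp.unique_single d]
  exact h
end

section
/- Let R be a commutative ring and F a formal group law over R with formal inverse ι. Then ι(ι(X)) = X in R[[X]], and consequently −ι(X)·ι(ι(X)) = −X·ι(X); hence the unique composable power series φ with φ(−X·ι(X)) = −ι(X)·ι(ι(X)) is the identity series φ(T) = T, which coincides with the series associated in the same way to the identity morphism of F. (In particular the functor N from formal group laws to 2-valued formal groups of type I is not faithful.) -/
noncomputable section Aux

namespace FGLAux

variable {R : Type*} [CommRing R] {τ : Type*}

/-- constant exponent vector -/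
def cc (k n : ℕ) : Fin k →₀ ℕ := Finsupp.equivFunOnFinite.symm fun _ => n

@[simp] lemma cc_apply (k n : ℕ) (i : Fin k) : cc k n i = n := rfl

lemma wt_eq {k : ℕ} (e : Fin k →₀ ℕ) : wt e = ∑ i, e i :=
  Finsupp.sum_fintype _ _ (fun _ => rfl)

lemma apply_le_wt {k : ℕ} (e : Fin k →₀ ℕ) (i : Fin k) : e i ≤ wt e := by
  rw [wt_eq]
  exact Finset.single_le_sum (fun _ _ => Nat.zero_le _) (Finset.mem_univ i)

lemma wt_add (d e : τ →₀ ℕ) : wt (d + e) = wt d + wt e :=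
  Finsupp.sum_add_index' (fun _ => rfl) (fun _ _ _ => rfl)

lemma wt_single (x : τ) (n : ℕ) : wt (Finsupp.single x n) = n :=
  Finsupp.sum_single_index rfl

lemma wt_eq_zero {d : τ →₀ ℕ} (h : wt d = 0) : d = 0 := by
  rw [wt, Finsupp.sum] at h
  have h2 := Finset.sum_eq_zero_iff.1 h
  ext x
  by_cases hx : x ∈ d.support
  · exact h2 x hx
  · simpa using Finsupp.notMem_support_iff.1 hx

lemma wt_zero : wt (0 : τ →₀ ℕ) = 0 := by simp [wt]

lemma unit_eq_single (d : Unit →₀ ℕ) : d = Finsupp.single () (d ()) := by ext x; simp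

lemma coeff_unit (m : ℕ) (f : PowerSeries R) :
    MvPowerSeries.coeff (Finsupp.single () m) f = PowerSeries.coeff m f := rfl

/-- `LB n f` : all coefficients of weight `< n` vanish. -/
def LB (n : ℕ) (f : MvPowerSeries τ R) : Prop :=
  ∀ d : τ →₀ ℕ, wt d < n → MvPowerSeries.coeff d f = 0

lemma LB.mono {m n : ℕ} {f : MvPowerSeries τ R} (h : LB n f) (hmn : m ≤ n) : LB m f :=
  fun d hd => h d (lt_of_lt_of_le hd hmn)

lemma LB_one {f : MvPowerSeries τ R} (h : MvPowerSeries.constantCoeff (σ := τ) (R := R) f = 0) : LB 1 f := by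
  intro d hd
  have hd0 : d = 0 := wt_eq_zero (by omega)
  subst hd0
  rw [MvPowerSeries.coeff_zero_eq_constantCoeff]
  exact h

lemma LB.mul {m n : ℕ} {f g : MvPowerSeries τ R} (hf : LB m f) (hg : LB n g) :
    LB (m + n) (f * g) := by
  classical
  intro d hd
  rw [MvPowerSeries.coeff_mul]
  refine Finset.sum_eq_zero fun p hp => ?_
  rw [Finset.HasAntidiagonal.mem_antidiagonal] at hp
  have hw : wt p.1 + wt p.2 = wt d := by rw [← wt_add, hp]
  rcases lt_or_ge (wt p.1) m with h1 | h1
  · rw [hf p.1 h1, zero_mul]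
  · rw [hg p.2 (by omega), mul_zero]

lemma LB.pow {n : ℕ} {f : MvPowerSeries τ R} (hf : LB n f) (i : ℕ) : LB (i * n) (f ^ i) := by
  induction i with
  | zero =>
    intro d hd; rw [zero_mul] at hd; exact absurd hd (Nat.not_lt_zero _)
  | succ i ih =>
    rw [pow_succ]
    have := ih.mul hf
    have he : i * n + n = (i+1) * n := by ring
    rwa [he] at this

lemma LB_prod {α : Type*} (s : Finset α) (g : α → MvPowerSeries τ R) (n : α → ℕ)
    (h : ∀ i ∈ s, LB (n i) (g i)) : LB (∑ i ∈ s, n i) (∏ i ∈ s, g i) := by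
  classical
  induction s using Finset.induction_on with
  | empty =>
    simp only [Finset.sum_empty, Finset.prod_empty]
    intro d hd; exact absurd hd (Nat.not_lt_zero _)
  | insert a s hnotmem ih =>
    rw [Finset.sum_insert hnotmem, Finset.prod_insert hnotmem]
    exact (h a (Finset.mem_insert_self a s)).mul
      (ih fun i hi => h i (Finset.mem_insert_of_mem hi))

lemma LB_prod_pow {k : ℕ} {a : Fin k → MvPowerSeries τ R} (ha : ∀ i, LB 1 (a i))
    (e : Fin k →₀ ℕ) : LB (wt e) (∏ i, a i ^ e i) := by
  rw [wt_eq]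
  refine LB_prod Finset.univ _ _ fun i _ => ?_
  simpa using (ha i).pow (e i)

lemma mem_Iic_cc {k n : ℕ} {e : Fin k →₀ ℕ} : e ∈ Finset.Iic (cc k n) ↔ ∀ i, e i ≤ n := by
  rw [Finset.mem_Iic, Finsupp.le_def]; simp

lemma wt_gt_of_not_mem {k n : ℕ} {e : Fin k →₀ ℕ} (h : e ∉ Finset.Iic (cc k n)) :
    n < wt e := by
  rw [mem_Iic_cc] at h
  push_neg at h
  obtain ⟨i, hi⟩ := h
  exact lt_of_lt_of_le hi (apply_le_wt e i)

lemma Iic_cc_mono {k : ℕ} {m n : ℕ} (h : m ≤ n) :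
    Finset.Iic (cc k m) ⊆ Finset.Iic (cc k n) := fun e he => by
  rw [mem_Iic_cc] at he ⊢
  exact fun i => le_trans (he i) h

/-- The master formula for coefficients of `msubst`. -/
lemma coeff_msubst {k : ℕ} (hk : k ≠ 0) (a : Fin k → MvPowerSeries τ R)
    (ha : ∀ i, LB 1 (a i)) (f : MvPowerSeries (Fin k) R) (d : τ →₀ ℕ)
    (S : Finset (Fin k →₀ ℕ)) (hS : Finset.Iic (cc k (wt d)) ⊆ S) :
    MvPowerSeries.coeff d (msubst a f)
      = ∑ e ∈ S, MvPowerSeries.coeff e f * MvPowerSeries.coeff d (∏ i, a i ^ e i) := by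
  classical
  set N : Fin k →₀ ℕ := Finsupp.equivFunOnFinite.symm fun _ => wt d + 1 with hN
  set p : MvPolynomial (Fin k) R := MvPowerSeries.trunc R N f with hp
  have happly : MvPowerSeries.coeff d (msubst a f)
      = MvPowerSeries.coeff d (MvPolynomial.eval₂ ((MvPowerSeries.C (σ := τ) (R := R))) a p) := by
    rw [MvPowerSeries.coeff_apply]
    rfl
  have heval : MvPowerSeries.coeff d (MvPolynomial.eval₂ ((MvPowerSeries.C (σ := τ) (R := R))) a p)
      = ∑ e ∈ p.support, MvPolynomial.coeff e p * MvPowerSeries.coeff d (∏ i, a i ^ e i) := by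
    rw [MvPolynomial.eval₂_eq', map_sum]
    exact Finset.sum_congr rfl fun e _ => MvPowerSeries.coeff_C_mul _ _ _
  have hpc : ∀ e : Fin k →₀ ℕ, MvPolynomial.coeff e p
      = if e < N then MvPowerSeries.coeff e f else 0 := fun e =>
    MvPowerSeries.coeff_trunc e N f
  have hlt : ∀ e : Fin k →₀ ℕ, e ∈ Finset.Iic (cc k (wt d)) → e < N := by
    intro e he
    rw [mem_Iic_cc] at he
    rw [lt_iff_le_and_ne]
    constructor
    · rw [Finsupp.le_def]
      intro i
      have := he i
      simp only [hN, Finsupp.equivFunOnFinite_symm_apply_apply]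
      omega
    · intro hcontra
      have i0 : Fin k := ⟨0, Nat.pos_of_ne_zero hk⟩
      have h2 := congrArg (fun g => g i0) hcontra
      simp only [hN, Finsupp.equivFunOnFinite_symm_apply_apply] at h2
      have := he i0
      omega
  have key : ∀ e : Fin k →₀ ℕ, e ∉ Finset.Iic (cc k (wt d)) →
      MvPowerSeries.coeff e f * MvPowerSeries.coeff d (∏ i, a i ^ e i) = 0 := by
    intro e he
    rw [LB_prod_pow ha e d (wt_gt_of_not_mem he), mul_zero]
  have hsupp : ∀ e ∈ p.support, MvPolynomial.coeff e p = MvPowerSeries.coeff e f := by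
    intro e he
    rw [MvPolynomial.mem_support_iff] at he
    rw [hpc e] at he ⊢
    by_cases hlt2 : e < N
    · rw [if_pos hlt2]
    · exact absurd rfl (by rwa [if_neg hlt2] at he)
  rw [happly, heval, Finset.sum_congr rfl fun e he => by rw [hsupp e he]]
  rw [Finset.sum_subset (Finset.subset_union_left (s₂ := S)),
    ← Finset.sum_subset (Finset.subset_union_right (s₁ := p.support))]
  · -- x ∈ union, x ∉ S
    intro x _ hxS
    exact key x fun hc => hxS (hS hc)
  · -- x ∈ union, x ∉ support
    intro x _ hxp
    rw [MvPolynomial.notMem_support_iff, hpc x] at hxp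
    by_cases hx : x < N
    · rw [if_pos hx] at hxp
      rw [hxp, zero_mul]
    · exact key x fun hc => hx (hlt x hc)

/-- The master formula for coefficients of `psubst`. -/
lemma coeff_psubst (a : MvPowerSeries τ R) (ha : LB 1 a) (f : PowerSeries R)
    (d : τ →₀ ℕ) (n : ℕ) (hn : wt d < n) :
    MvPowerSeries.coeff d (psubst a f)
      = ∑ i ∈ Finset.range n, PowerSeries.coeff i f * MvPowerSeries.coeff d (a ^ i) := by
  classical
  set p : Polynomial R := PowerSeries.trunc (wt d + 1) f with hp
  have happly : MvPowerSeries.coeff d (psubst a f)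
      = MvPowerSeries.coeff d (Polynomial.eval₂ ((MvPowerSeries.C (σ := τ) (R := R))) a p) := by
    rw [MvPowerSeries.coeff_apply]
    rfl
  have heval : MvPowerSeries.coeff d (Polynomial.eval₂ ((MvPowerSeries.C (σ := τ) (R := R))) a p)
      = ∑ i ∈ p.support, p.coeff i * MvPowerSeries.coeff d (a ^ i) := by
    rw [Polynomial.eval₂_eq_sum, Polynomial.sum_def, map_sum]
    exact Finset.sum_congr rfl fun i _ => MvPowerSeries.coeff_C_mul _ _ _
  have hpc : ∀ i : ℕ, p.coeff i = if i < wt d + 1 then PowerSeries.coeff i f else 0 :=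
    fun i => PowerSeries.coeff_trunc i (wt d + 1) f
  have key : ∀ i : ℕ, wt d < i →
      PowerSeries.coeff i f * MvPowerSeries.coeff d (a ^ i) = 0 := by
    intro i hi
    have hLB : LB i (a ^ i) := by simpa using ha.pow i
    rw [hLB d hi, mul_zero]
  have hsupp : ∀ i ∈ p.support, p.coeff i = PowerSeries.coeff i f := by
    intro i hi
    rw [Polynomial.mem_support_iff] at hi
    rw [hpc i] at hi ⊢
    by_cases hlt2 : i < wt d + 1
    · rw [if_pos hlt2]
    · exact absurd rfl (by rwa [if_neg hlt2] at hi)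
  rw [happly, heval, Finset.sum_congr rfl fun i hi => by rw [hsupp i hi]]
  rw [Finset.sum_subset (Finset.subset_union_left (s₂ := Finset.range n)),
    ← Finset.sum_subset (Finset.subset_union_right (s₁ := p.support))]
  · intro x _ hxS
    rw [Finset.mem_range] at hxS
    exact key x (by omega)
  · intro x _ hxp
    rw [Polynomial.notMem_support_iff, hpc x] at hxp
    by_cases hx : x < wt d + 1
    · rw [if_pos hx] at hxp
      rw [hxp, zero_mul]
    · exact key x (by omega)

variable {R : Type*} [CommRing R] {τ : Type*}

lemma msubst_monomial {k : ℕ} (hk : k ≠ 0) (a : Fin k → MvPowerSeries τ R)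
    (ha : ∀ i, LB 1 (a i)) (e₀ : Fin k →₀ ℕ) (r : R) :
    msubst a (MvPowerSeries.monomial e₀ r)
      = (MvPowerSeries.C (σ := τ) (R := R)) r * ∏ i, a i ^ e₀ i := by
  classical
  apply MvPowerSeries.ext; intro d
  rw [coeff_msubst hk a ha _ d _ (subset_refl _), MvPowerSeries.coeff_C_mul]
  by_cases he : e₀ ∈ Finset.Iic (cc k (wt d))
  · rw [Finset.sum_eq_single e₀]
    · rw [MvPowerSeries.coeff_monomial, if_pos rfl]
    · intro b _ hbne
      rw [MvPowerSeries.coeff_monomial, if_neg hbne, zero_mul]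
    · intro hne; exact absurd he hne
  · have h0 : MvPowerSeries.coeff d (∏ i, a i ^ e₀ i) = 0 :=
      LB_prod_pow ha e₀ d (wt_gt_of_not_mem he)
    rw [h0, mul_zero]
    apply Finset.sum_eq_zero
    intro b hb
    rw [MvPowerSeries.coeff_monomial]
    by_cases hbe : b = e₀
    · subst hbe; exact absurd hb he
    · rw [if_neg hbe, zero_mul]

lemma msubst_one {k : ℕ} (hk : k ≠ 0) (a : Fin k → MvPowerSeries τ R)
    (ha : ∀ i, LB 1 (a i)) : msubst a (1 : MvPowerSeries (Fin k) R) = 1 := by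
  have h := msubst_monomial hk a ha 0 1
  simpa using h

lemma msubst_X {k : ℕ} (hk : k ≠ 0) (a : Fin k → MvPowerSeries τ R)
    (ha : ∀ i, LB 1 (a i)) (i : Fin k) :
    msubst a (MvPowerSeries.X i) = a i := by
  classical
  have h := msubst_monomial hk a ha (Finsupp.single i 1) 1
  rw [show (MvPowerSeries.X i : MvPowerSeries (Fin k) R)
      = MvPowerSeries.monomial (Finsupp.single i 1) 1 from rfl, h]
  rw [map_one, one_mul, Fintype.prod_eq_single i]
  · rw [Finsupp.single_eq_same, pow_one]
  · intro j hj
    rw [Finsupp.single_eq_of_ne hj, pow_zero]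

lemma msubst_zero {k : ℕ} (hk : k ≠ 0) (a : Fin k → MvPowerSeries τ R)
    (ha : ∀ i, LB 1 (a i)) : msubst a (0 : MvPowerSeries (Fin k) R) = 0 := by
  apply MvPowerSeries.ext; intro d
  rw [coeff_msubst hk a ha _ d _ (subset_refl _)]
  simp

lemma msubst_add {k : ℕ} (hk : k ≠ 0) (a : Fin k → MvPowerSeries τ R)
    (ha : ∀ i, LB 1 (a i)) (f g : MvPowerSeries (Fin k) R) :
    msubst a (f + g) = msubst a f + msubst a g := by
  apply MvPowerSeries.ext; intro d
  rw [map_add, coeff_msubst hk a ha _ d _ (subset_refl _),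
    coeff_msubst hk a ha f d _ (subset_refl _), coeff_msubst hk a ha g d _ (subset_refl _),
    ← Finset.sum_add_distrib]
  refine Finset.sum_congr rfl fun e _ => ?_
  rw [map_add, add_mul]

lemma prod_pow_add {k : ℕ} (a : Fin k → MvPowerSeries τ R) (u v : Fin k →₀ ℕ) :
    (∏ i, a i ^ (u + v) i) = (∏ i, a i ^ u i) * ∏ i, a i ^ v i := by
  rw [← Finset.prod_mul_distrib]
  refine Finset.prod_congr rfl fun i _ => ?_
  rw [Finsupp.add_apply, pow_add]

lemma msubst_mul {k : ℕ} (hk : k ≠ 0) (a : Fin k → MvPowerSeries τ R)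
    (ha : ∀ i, LB 1 (a i)) (f g : MvPowerSeries (Fin k) R) :
    msubst a (f * g) = msubst a f * msubst a g := by
  classical
  apply MvPowerSeries.ext; intro d
  set S := Finset.Iic (cc k (wt d)) with hSdef
  rw [coeff_msubst hk a ha _ d S (subset_refl _), MvPowerSeries.coeff_mul]
  -- RHS
  have hR : ∀ p ∈ Finset.HasAntidiagonal.antidiagonal d,
      MvPowerSeries.coeff p.1 (msubst a f) * MvPowerSeries.coeff p.2 (msubst a g)
      = ∑ u ∈ S, ∑ v ∈ S,
          MvPowerSeries.coeff u f * MvPowerSeries.coeff v g *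
            (MvPowerSeries.coeff p.1 (∏ i, a i ^ u i)
              * MvPowerSeries.coeff p.2 (∏ i, a i ^ v i)) := by
    intro p hp
    rw [Finset.HasAntidiagonal.mem_antidiagonal] at hp
    have h1 : wt p.1 ≤ wt d := by
      rw [← hp, wt_add]; omega
    have h2 : wt p.2 ≤ wt d := by
      rw [← hp, wt_add]; omega
    rw [coeff_msubst hk a ha f p.1 S (Iic_cc_mono h1),
      coeff_msubst hk a ha g p.2 S (Iic_cc_mono h2), Finset.sum_mul_sum]
    refine Finset.sum_congr rfl fun u _ => Finset.sum_congr rfl fun v _ => ?_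
    ring
  rw [Finset.sum_congr rfl hR, Finset.sum_comm]
  have hswap : ∀ u ∈ S,
      (∑ p ∈ Finset.HasAntidiagonal.antidiagonal d, ∑ v ∈ S,
        MvPowerSeries.coeff u f * MvPowerSeries.coeff v g *
          (MvPowerSeries.coeff p.1 (∏ i, a i ^ u i)
            * MvPowerSeries.coeff p.2 (∏ i, a i ^ v i)))
      = ∑ v ∈ S, MvPowerSeries.coeff u f * MvPowerSeries.coeff v g *
          MvPowerSeries.coeff d ((∏ i, a i ^ u i) * ∏ i, a i ^ v i) := by
    intro u _
    rw [Finset.sum_comm]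
    refine Finset.sum_congr rfl fun v _ => ?_
    rw [MvPowerSeries.coeff_mul, Finset.mul_sum]
  rw [Finset.sum_congr rfl hswap]
  -- LHS: expand coefficient of product
  have hL : ∀ e ∈ S, MvPowerSeries.coeff e (f * g) * MvPowerSeries.coeff d (∏ i, a i ^ e i)
      = ∑ p ∈ Finset.HasAntidiagonal.antidiagonal e,
          MvPowerSeries.coeff p.1 f * MvPowerSeries.coeff p.2 g *
            MvPowerSeries.coeff d ((∏ i, a i ^ p.1 i) * ∏ i, a i ^ p.2 i) := by
    intro e _
    rw [MvPowerSeries.coeff_mul, Finset.sum_mul]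
    refine Finset.sum_congr rfl fun p hp => ?_
    rw [Finset.HasAntidiagonal.mem_antidiagonal] at hp
    rw [← hp, prod_pow_add]
  rw [Finset.sum_congr rfl hL]
  -- biUnion argument
  rw [← Finset.sum_biUnion]
  swap
  · intro e1 h1 e2 h2 hne
    simp only [Finset.disjoint_left]
    intro p hp1 hp2
    rw [Finset.HasAntidiagonal.mem_antidiagonal] at hp1 hp2
    exact hne (by rw [← hp1, hp2])
  · rw [Finset.sum_subset (show S.biUnion Finset.HasAntidiagonal.antidiagonal ⊆ S ×ˢ S from ?_) ?_,
      Finset.sum_product]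
    · intro p hp
      rw [Finset.mem_biUnion] at hp
      obtain ⟨e, heS, hpe⟩ := hp
      rw [Finset.HasAntidiagonal.mem_antidiagonal] at hpe
      rw [Finset.mem_product]
      rw [hSdef, Finset.mem_Iic] at heS ⊢
      rw [Finset.mem_Iic]
      constructor
      · exact le_trans (le_trans (le_add_right le_rfl) (le_of_eq hpe)) heS
      · exact le_trans (le_trans (le_add_left le_rfl) (le_of_eq hpe)) heS
    · intro p hp hpn
      have hsum : p.1 + p.2 ∉ S := by
        intro hc
        exact hpn (Finset.mem_biUnion.2 ⟨p.1 + p.2, hc, Finset.HasAntidiagonal.mem_antidiagonal.2 rfl⟩)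
      have hw : wt d < wt p.1 + wt p.2 := by
        have := wt_gt_of_not_mem (by rwa [hSdef] at hsum)
        rwa [wt_add] at this
      have hprod : MvPowerSeries.coeff d ((∏ i, a i ^ p.1 i) * ∏ i, a i ^ p.2 i) = 0 :=
        (LB_prod_pow ha p.1).mul (LB_prod_pow ha p.2) d hw
      rw [hprod, mul_zero]

lemma psubst_zero (a : MvPowerSeries τ R) (ha : LB 1 a) :
    psubst a (0 : PowerSeries R) = 0 := by
  apply MvPowerSeries.ext; intro d
  rw [coeff_psubst a ha _ d (wt d + 1) (Nat.lt_succ_self _)]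
  simp

lemma psubst_one (a : MvPowerSeries τ R) (ha : LB 1 a) :
    psubst a (1 : PowerSeries R) = 1 := by
  apply MvPowerSeries.ext; intro d
  rw [coeff_psubst a ha _ d (wt d + 1) (Nat.lt_succ_self _)]
  rw [Finset.sum_eq_single 0]
  · simp
  · intro i _ hne
    rw [PowerSeries.coeff_one, if_neg hne, zero_mul]
  · intro h; exact absurd (Finset.mem_range.2 (by omega)) h

lemma psubst_add (a : MvPowerSeries τ R) (ha : LB 1 a) (f g : PowerSeries R) :
    psubst a (f + g) = psubst a f + psubst a g := by
  apply MvPowerSeries.ext; intro d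
  rw [map_add, coeff_psubst a ha _ d (wt d + 1) (Nat.lt_succ_self _),
    coeff_psubst a ha f d (wt d + 1) (Nat.lt_succ_self _),
    coeff_psubst a ha g d (wt d + 1) (Nat.lt_succ_self _), ← Finset.sum_add_distrib]
  refine Finset.sum_congr rfl fun i _ => ?_
  rw [map_add, add_mul]

lemma psubst_X (c : MvPowerSeries τ R) (hc : LB 1 c) :
    psubst c (PowerSeries.X : PowerSeries R) = c := by
  apply MvPowerSeries.ext; intro d
  rw [coeff_psubst c hc _ d (wt d + 1) (Nat.lt_succ_self _)]
  rcases Nat.eq_zero_or_pos (wt d) with h | h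
  · have h1 : Finset.range (wt d + 1) = {0} := by rw [h]; exact Finset.range_one
    rw [h1, Finset.sum_singleton, PowerSeries.coeff_X,
      if_neg (by omega : ¬(0:ℕ) = 1), zero_mul]
    exact (hc d (by omega)).symm
  · rw [Finset.sum_eq_single 1]
    · rw [PowerSeries.coeff_X, if_pos rfl, pow_one, one_mul]
    · intro i _ hne
      rw [PowerSeries.coeff_X, if_neg hne, zero_mul]
    · intro h1; exact absurd (Finset.mem_range.2 (by omega)) h1

lemma psubst_mul (c : MvPowerSeries τ R) (hc : LB 1 c) (f g : PowerSeries R) :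
    psubst c (f * g) = psubst c f * psubst c g := by
  classical
  apply MvPowerSeries.ext; intro d
  set n := wt d + 1 with hndef
  set S := Finset.range n with hSdef
  have hni : wt d < n := Nat.lt_succ_self _
  rw [coeff_psubst c hc _ d n hni, MvPowerSeries.coeff_mul]
  have hR : ∀ p ∈ Finset.HasAntidiagonal.antidiagonal d,
      MvPowerSeries.coeff p.1 (psubst c f) * MvPowerSeries.coeff p.2 (psubst c g)
      = ∑ u ∈ S, ∑ v ∈ S,
          PowerSeries.coeff u f * PowerSeries.coeff v g *
            (MvPowerSeries.coeff p.1 (c ^ u) * MvPowerSeries.coeff p.2 (c ^ v)) := by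
    intro p hp
    rw [Finset.HasAntidiagonal.mem_antidiagonal] at hp
    have h1 : wt p.1 < n := by
      have := wt_add p.1 p.2; rw [hp] at this; omega
    have h2 : wt p.2 < n := by
      have := wt_add p.1 p.2; rw [hp] at this; omega
    rw [coeff_psubst c hc f p.1 n h1, coeff_psubst c hc g p.2 n h2, Finset.sum_mul_sum]
    refine Finset.sum_congr rfl fun u _ => Finset.sum_congr rfl fun v _ => ?_
    ring
  rw [Finset.sum_congr rfl hR, Finset.sum_comm]
  have hswap : ∀ u ∈ S,
      (∑ p ∈ Finset.HasAntidiagonal.antidiagonal d, ∑ v ∈ S,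
        PowerSeries.coeff u f * PowerSeries.coeff v g *
          (MvPowerSeries.coeff p.1 (c ^ u) * MvPowerSeries.coeff p.2 (c ^ v)))
      = ∑ v ∈ S, PowerSeries.coeff u f * PowerSeries.coeff v g *
          MvPowerSeries.coeff d (c ^ u * c ^ v) := by
    intro u _
    rw [Finset.sum_comm]
    refine Finset.sum_congr rfl fun v _ => ?_
    rw [MvPowerSeries.coeff_mul, Finset.mul_sum]
  rw [Finset.sum_congr rfl hswap]
  have hL : ∀ e ∈ S, PowerSeries.coeff e (f * g) * MvPowerSeries.coeff d (c ^ e)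
      = ∑ p ∈ Finset.HasAntidiagonal.antidiagonal e,
          PowerSeries.coeff p.1 f * PowerSeries.coeff p.2 g *
            MvPowerSeries.coeff d (c ^ p.1 * c ^ p.2) := by
    intro e _
    rw [PowerSeries.coeff_mul, Finset.sum_mul]
    refine Finset.sum_congr rfl fun p hp => ?_
    rw [Finset.HasAntidiagonal.mem_antidiagonal] at hp
    rw [← hp, pow_add]
  rw [Finset.sum_congr rfl hL]
  rw [← Finset.sum_biUnion]
  swap
  · intro e1 _ e2 _ hne
    simp only [Finset.disjoint_left]
    intro p hp1 hp2
    rw [Finset.HasAntidiagonal.mem_antidiagonal] at hp1 hp2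
    exact hne (by rw [← hp1, hp2])
  · rw [Finset.sum_subset (show S.biUnion Finset.HasAntidiagonal.antidiagonal ⊆ S ×ˢ S from ?_) ?_,
      Finset.sum_product]
    · intro p hp
      rw [Finset.mem_biUnion] at hp
      obtain ⟨e, heS, hpe⟩ := hp
      rw [Finset.HasAntidiagonal.mem_antidiagonal] at hpe
      rw [Finset.mem_product]
      rw [hSdef, Finset.mem_range] at heS ⊢
      rw [Finset.mem_range]
      omega
    · intro p hp hpn
      rw [Finset.mem_product, hSdef, Finset.mem_range, Finset.mem_range] at hp
      have hsum : p.1 + p.2 ∉ S := by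
        intro hc2
        exact hpn (Finset.mem_biUnion.2 ⟨p.1 + p.2, hc2, Finset.HasAntidiagonal.mem_antidiagonal.2 rfl⟩)
      rw [hSdef, Finset.mem_range] at hsum
      have hw : wt d < p.1 + p.2 := by omega
      have hprod : MvPowerSeries.coeff d (c ^ p.1 * c ^ p.2) = 0 := by
        have h1 : LB p.1 (c ^ p.1) := by simpa using hc.pow p.1
        have h2 : LB p.2 (c ^ p.2) := by simpa using hc.pow p.2
        exact h1.mul h2 d hw
      rw [hprod, mul_zero]

/-- `msubst a` as a ring hom. -/
def msubstHom {k : ℕ} (hk : k ≠ 0) (a : Fin k → MvPowerSeries τ R)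
    (ha : ∀ i, LB 1 (a i)) : MvPowerSeries (Fin k) R →+* MvPowerSeries τ R where
  toFun := msubst a
  map_one' := msubst_one hk a ha
  map_mul' := msubst_mul hk a ha
  map_zero' := msubst_zero hk a ha
  map_add' := msubst_add hk a ha

/-- `psubst c` as a ring hom. -/
def psubstHom (c : MvPowerSeries τ R) (hc : LB 1 c) :
    PowerSeries R →+* MvPowerSeries τ R where
  toFun := psubst c
  map_one' := psubst_one c hc
  map_mul' := psubst_mul c hc
  map_zero' := psubst_zero c hc
  map_add' := psubst_add c hc

lemma constCoeff_msubst {k : ℕ} (hk : k ≠ 0) (a : Fin k → MvPowerSeries τ R)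
    (ha : ∀ i, LB 1 (a i)) (f : MvPowerSeries (Fin k) R) :
    MvPowerSeries.coeff (0 : τ →₀ ℕ) (msubst a f)
      = MvPowerSeries.coeff (0 : Fin k →₀ ℕ) f := by
  classical
  have hwt : wt (0 : τ →₀ ℕ) = 0 := by simp [wt]
  have hsub : Finset.Iic (cc k (wt (0:τ →₀ ℕ))) ⊆ {(0 : Fin k →₀ ℕ)} := by
    intro e he
    rw [hwt, mem_Iic_cc] at he
    rw [Finset.mem_singleton]
    ext i
    simpa using he i
  rw [coeff_msubst hk a ha f 0 _ hsub, Finset.sum_singleton]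
  simp [hwt]

lemma LB_one_msubst {k : ℕ} (hk : k ≠ 0) (a : Fin k → MvPowerSeries τ R)
    (ha : ∀ i, LB 1 (a i)) (f : MvPowerSeries (Fin k) R) (hf : LB 1 f) :
    LB 1 (msubst a f) := by
  apply LB_one
  rw [← MvPowerSeries.coeff_zero_eq_constantCoeff_apply, constCoeff_msubst hk a ha f]
  have : wt (0 : Fin k →₀ ℕ) = 0 := by simp [wt]
  exact hf 0 (by omega)

lemma constCoeff_psubst (c : MvPowerSeries τ R) (hc : LB 1 c) (f : PowerSeries R) :
    MvPowerSeries.coeff (0 : τ →₀ ℕ) (psubst c f) = PowerSeries.coeff 0 f := by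
  have hwt : wt (0 : τ →₀ ℕ) = 0 := by simp [wt]
  rw [coeff_psubst c hc f 0 1 (by omega), Finset.range_one, Finset.sum_singleton]
  simp

lemma msubst_msubst {m k : ℕ} (hm : m ≠ 0) (hk : k ≠ 0)
    (a : Fin m → MvPowerSeries (Fin k) R) (ha : ∀ i, LB 1 (a i))
    (b : Fin k → MvPowerSeries τ R) (hb : ∀ i, LB 1 (b i))
    (f : MvPowerSeries (Fin m) R) :
    msubst b (msubst a f) = msubst (fun i => msubst b (a i)) f := by
  classical
  have hba : ∀ i, LB 1 (msubst b (a i)) := fun i => LB_one_msubst hk b hb (a i) (ha i)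
  apply MvPowerSeries.ext; intro d
  set n := wt d with hndef
  set Sd := Finset.Iic (cc k n) with hSd
  set T := Finset.Iic (cc m (k * n + n)) with hT
  -- LHS
  rw [coeff_msubst hk b hb (msubst a f) d Sd (subset_refl _)]
  have hG : ∀ e' ∈ Sd, MvPowerSeries.coeff e' (msubst a f)
      = ∑ e ∈ T, MvPowerSeries.coeff e f * MvPowerSeries.coeff e' (∏ i, a i ^ e i) := by
    intro e' he'
    refine coeff_msubst hm a ha f e' T (Iic_cc_mono ?_)
    rw [hSd, Finset.mem_Iic] at he'
    have hwte' : wt e' ≤ k * n := by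
      rw [wt_eq]
      have h1 : (∑ i, e' i) ≤ ∑ _i : Fin k, n :=
        Finset.sum_le_sum fun i _ => by simpa using Finsupp.le_def.1 he' i
      have h2 : (∑ _i : Fin k, n) = k * n := by
        rw [Finset.sum_const, Finset.card_univ, Fintype.card_fin, smul_eq_mul]
      omega
    omega
  rw [Finset.sum_congr rfl fun e' he' => by rw [hG e' he', Finset.sum_mul]]
  rw [Finset.sum_comm]
  -- RHS
  rw [coeff_msubst hm (fun i => msubst b (a i)) hba f d T (Iic_cc_mono (by omega))]
  refine Finset.sum_congr rfl fun e _ => ?_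
  have hprod : (∏ i, (msubst b (a i)) ^ e i) = msubst b (∏ i, a i ^ e i) := by
    have := map_prod (msubstHom hk b hb) (fun i => a i ^ e i) Finset.univ
    simp only [msubstHom, RingHom.coe_mk, MonoidHom.coe_mk, OneHom.coe_mk, map_pow] at this
    exact this.symm
  rw [hprod, coeff_msubst hk b hb _ d Sd (subset_refl _), Finset.mul_sum]
  refine Finset.sum_congr rfl fun e' _ => ?_
  ring

lemma psubst_msubst {m : ℕ} (hm : m ≠ 0)
    (a : Fin m → PowerSeries R) (ha : ∀ i, LB 1 (a i))
    (c : MvPowerSeries τ R) (hc : LB 1 c)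
    (f : MvPowerSeries (Fin m) R) :
    psubst c (msubst a f) = msubst (fun i => psubst c (a i)) f := by
  classical
  have hca : ∀ i, LB 1 (psubst c (a i)) := by
    intro i
    apply LB_one
    rw [← MvPowerSeries.coeff_zero_eq_constantCoeff_apply, constCoeff_psubst c hc,
      ← coeff_unit 0 (a i), Finsupp.single_zero]
    exact ha i 0 (by rw [wt_zero]; omega)
  apply MvPowerSeries.ext; intro d
  set n := wt d with hndef
  set T := Finset.Iic (cc m n) with hT
  rw [coeff_psubst c hc (msubst a f) d (n+1) (Nat.lt_succ_self _)]
  have hG : ∀ j ∈ Finset.range (n+1), PowerSeries.coeff j (msubst a f)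
      = ∑ e ∈ T, MvPowerSeries.coeff e f
          * MvPowerSeries.coeff (Finsupp.single () j) (∏ i, a i ^ e i) := by
    intro j hj
    rw [Finset.mem_range] at hj
    have : PowerSeries.coeff j (msubst a f)
        = MvPowerSeries.coeff (Finsupp.single () j) (msubst a f) := rfl
    rw [this]
    refine coeff_msubst hm a ha f (Finsupp.single () j) T (Iic_cc_mono ?_)
    rw [wt_single]; omega
  rw [Finset.sum_congr rfl fun j hj => by rw [hG j hj, Finset.sum_mul]]
  rw [Finset.sum_comm]
  rw [coeff_msubst hm (fun i => psubst c (a i)) hca f d T (subset_refl _)]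
  refine Finset.sum_congr rfl fun e _ => ?_
  have hprod : (∏ i, (psubst c (a i)) ^ e i) = psubst c (∏ i, a i ^ e i) := by
    have := map_prod (psubstHom c hc) (fun i => a i ^ e i) Finset.univ
    simp only [psubstHom, RingHom.coe_mk, MonoidHom.coe_mk, OneHom.coe_mk, map_pow] at this
    exact this.symm
  rw [hprod, coeff_psubst c hc _ d (n+1) (Nat.lt_succ_self _), Finset.mul_sum]
  refine Finset.sum_congr rfl fun j _ => ?_
  have : PowerSeries.coeff j (∏ i, a i ^ e i)
      = MvPowerSeries.coeff (Finsupp.single () j) (∏ i, a i ^ e i) := rfl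
  rw [this]
  ring

lemma comp_vec2 {α β : Type*} (h : α → β) (u v : α) :
    (fun i => h (![u, v] i)) = ![h u, h v] := by
  funext i; fin_cases i <;> rfl

lemma LB_one_X {k : ℕ} (i : Fin k) : LB 1 (MvPowerSeries.X i : MvPowerSeries (Fin k) R) :=
  LB_one (MvPowerSeries.constantCoeff_X i)

lemma LB_one_zero : LB 1 (0 : MvPowerSeries τ R) := LB_one (map_zero _)

section FGL

variable (F : MvPowerSeries (Fin 2) R)

lemma constCoeff_F (hF : IsFGL F) : MvPowerSeries.coeff (0 : Fin 2 →₀ ℕ) F = 0 := by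
  have h := congrArg (MvPowerSeries.coeff (0 : Fin 2 →₀ ℕ)) hF.zero_right
  rw [constCoeff_msubst two_ne_zero _ ?hab F] at h
  · rw [h]
    simp [MvPowerSeries.coeff_zero_eq_constantCoeff]
  · intro i; fin_cases i
    · exact LB_one_X 0
    · exact LB_one_zero

lemma LB_one_F (hF : IsFGL F) : LB 1 F :=
  LB_one (by rw [← MvPowerSeries.coeff_zero_eq_constantCoeff_apply]; exact constCoeff_F F hF)

/-- `F(a, 0) = a` for any composable one-variable `a`. -/
lemma F_unit_right (hF : IsFGL F) (a : MvPowerSeries Unit R) (ha : LB 1 a) :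
    msubst ![a, 0] F = a := by
  have hin : ∀ i, LB 1 ((![MvPowerSeries.X 0, 0] : Fin 2 → MvPowerSeries (Fin 2) R) i) := by
    intro i; fin_cases i
    · exact LB_one_X 0
    · exact LB_one_zero
  have hb : ∀ i, LB 1 ((![a, 0] : Fin 2 → MvPowerSeries Unit R) i) := by
    intro i; fin_cases i
    · exact ha
    · exact LB_one_zero
  have h := congrArg (msubst ![a, (0 : MvPowerSeries Unit R)]) hF.zero_right
  rw [msubst_msubst two_ne_zero two_ne_zero _ hin _ hb F, comp_vec2,
    msubst_X two_ne_zero _ hb 0, msubst_zero two_ne_zero _ hb] at h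
  have h0 : (![a, 0] : Fin 2 → MvPowerSeries Unit R) 0 = a := rfl
  rw [h0] at h
  exact h

/-- `F(0, a) = a` for any composable one-variable `a`. -/
lemma F_unit_left (hF : IsFGL F) (a : MvPowerSeries Unit R) (ha : LB 1 a) :
    msubst ![0, a] F = a := by
  have hin : ∀ i, LB 1 ((![0, MvPowerSeries.X 1] : Fin 2 → MvPowerSeries (Fin 2) R) i) := by
    intro i; fin_cases i
    · exact LB_one_zero
    · exact LB_one_X 1
  have hb : ∀ i, LB 1 ((![(0 : MvPowerSeries Unit R), a] : Fin 2 → MvPowerSeries Unit R) i) := by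
    intro i; fin_cases i
    · exact LB_one_zero
    · exact ha
  have h := congrArg (msubst ![(0 : MvPowerSeries Unit R), a]) hF.zero_left
  rw [msubst_msubst two_ne_zero two_ne_zero _ hin _ hb F, comp_vec2,
    msubst_X two_ne_zero _ hb 1, msubst_zero two_ne_zero _ hb] at h
  have h1 : (![(0 : MvPowerSeries Unit R), a] : Fin 2 → MvPowerSeries Unit R) 1 = a := rfl
  rw [h1] at h
  exact h

variable (ι : PowerSeries R)

lemma F_iota_iotasq (hF : IsFGL F) (hι : IsFormalInverse F ι) :
    msubst ![ι, psubst ι ι] F = (0 : MvPowerSeries Unit R) := by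
  have hli : LB 1 (ι : MvPowerSeries Unit R) := LB_one hι.1
  have ha : ∀ i, LB 1 ((![(PowerSeries.X : PowerSeries R), ι] : Fin 2 → MvPowerSeries Unit R) i) := by
    intro i; fin_cases i
    · exact LB_one (PowerSeries.constantCoeff_X)
    · exact hli
  have h := congrArg (psubst (ι : MvPowerSeries Unit R)) hι.2
  rw [psubst_msubst two_ne_zero _ ha _ hli F, comp_vec2, psubst_zero _ hli] at h
  have h0 : psubst (ι : MvPowerSeries Unit R) (PowerSeries.X : PowerSeries R) = ι :=
    psubst_X _ hli
  rw [h0] at h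
  exact h

/-- Main: `ι(ι(X)) = X`. -/
lemma iota_iota (hF : IsFGL F) (hι : IsFormalInverse F ι) :
    psubst ι ι = (PowerSeries.X : PowerSeries R) := by
  have hli : LB 1 (ι : MvPowerSeries Unit R) := LB_one hι.1
  have hX' : LB 1 ((PowerSeries.X : PowerSeries R) : MvPowerSeries Unit R) :=
    LB_one PowerSeries.constantCoeff_X
  have hι2 : LB 1 ((psubst ι ι : MvPowerSeries Unit R)) := by
    apply LB_one
    rw [← MvPowerSeries.coeff_zero_eq_constantCoeff_apply, constCoeff_psubst _ hli,
      PowerSeries.coeff_zero_eq_constantCoeff]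
    exact hι.1
  set b : Fin 3 → MvPowerSeries Unit R := ![(PowerSeries.X : PowerSeries R), ι, psubst ι ι]
    with hbdef
  have hb : ∀ i, LB 1 (b i) := by
    intro i; fin_cases i
    · exact hX'
    · exact hli
    · exact hι2
  have hG : LB 1 (msubst ![(MvPowerSeries.X 0 : MvPowerSeries (Fin 3) R), MvPowerSeries.X 1] F) := by
    refine LB_one_msubst two_ne_zero _ ?_ F (LB_one_F F hF)
    intro i; fin_cases i
    · exact LB_one_X 0
    · exact LB_one_X 1
  have hH : LB 1 (msubst ![(MvPowerSeries.X 1 : MvPowerSeries (Fin 3) R), MvPowerSeries.X 2] F) := by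
    refine LB_one_msubst two_ne_zero _ ?_ F (LB_one_F F hF)
    intro i; fin_cases i
    · exact LB_one_X 1
    · exact LB_one_X 2
  have hinL : ∀ i, LB 1 ((![msubst ![(MvPowerSeries.X 0 : MvPowerSeries (Fin 3) R), MvPowerSeries.X 1] F,
      MvPowerSeries.X 2] : Fin 2 → MvPowerSeries (Fin 3) R) i) := by
    intro i; fin_cases i
    · exact hG
    · exact LB_one_X 2
  have hinR : ∀ i, LB 1 ((![(MvPowerSeries.X 0 : MvPowerSeries (Fin 3) R),
      msubst ![(MvPowerSeries.X 1 : MvPowerSeries (Fin 3) R), MvPowerSeries.X 2] F] : Fin 2 → MvPowerSeries (Fin 3) R) i) := by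
    intro i; fin_cases i
    · exact LB_one_X 0
    · exact hH
  have h01 : ∀ i, LB 1 ((![(MvPowerSeries.X 0 : MvPowerSeries (Fin 3) R), MvPowerSeries.X 1] : Fin 2 → MvPowerSeries (Fin 3) R) i) := by
    intro i; fin_cases i
    · exact LB_one_X 0
    · exact LB_one_X 1
  have h12 : ∀ i, LB 1 ((![(MvPowerSeries.X 1 : MvPowerSeries (Fin 3) R), MvPowerSeries.X 2] : Fin 2 → MvPowerSeries (Fin 3) R) i) := by
    intro i; fin_cases i
    · exact LB_one_X 1
    · exact LB_one_X 2
  have h := congrArg (msubst b) hF.assoc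
  rw [msubst_msubst two_ne_zero three_ne_zero _ hinL b hb F,
    msubst_msubst two_ne_zero three_ne_zero _ hinR b hb F,
    comp_vec2, comp_vec2] at h
  -- reduce the four composite entries
  rw [msubst_msubst two_ne_zero three_ne_zero _ h01 b hb F,
    msubst_msubst two_ne_zero three_ne_zero _ h12 b hb F,
    comp_vec2, comp_vec2,
    msubst_X three_ne_zero b hb 0, msubst_X three_ne_zero b hb 1,
    msubst_X three_ne_zero b hb 2] at h
  have hb0 : b 0 = (PowerSeries.X : PowerSeries R) := rfl
  have hb1 : b 1 = (ι : MvPowerSeries Unit R) := rfl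
  have hb2 : b 2 = (psubst ι ι : MvPowerSeries Unit R) := rfl
  rw [hb0, hb1, hb2] at h
  rw [hι.2, F_iota_iotasq F ι hF hι] at h
  rw [F_unit_left F hF _ hι2, F_unit_right F hF _ hX'] at h
  exact h

end FGL

section Coeffs

lemma LB_of_forall {f : PowerSeries R} {n : ℕ}
    (h : ∀ m < n, PowerSeries.coeff m f = 0) : LB (τ := Unit) (R := R) n f := by
  intro d hd
  have hw : wt d = d () := by
    conv_lhs => rw [unit_eq_single d]
    rw [wt_single]
  have h2 : MvPowerSeries.coeff d f = PowerSeries.coeff (d ()) f := by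
    conv_lhs => rw [unit_eq_single d]
    rfl
  rw [h2]
  exact h _ (by omega)

/-- Extraction of the linear coefficient of a 2-variable substitution. -/
lemma coeff_one_msubst2 (u v : MvPowerSeries Unit R) (hu : LB 1 u) (hv : LB 1 v)
    (f : MvPowerSeries (Fin 2) R) :
    MvPowerSeries.coeff (Finsupp.single () 1) (msubst ![u, v] f)
      = MvPowerSeries.coeff (Finsupp.single (0 : Fin 2) 1) f
          * MvPowerSeries.coeff (Finsupp.single () 1) u
        + MvPowerSeries.coeff (Finsupp.single (1 : Fin 2) 1) f
          * MvPowerSeries.coeff (Finsupp.single () 1) v := by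
  classical
  have hab : ∀ i, LB 1 ((![u, v] : Fin 2 → MvPowerSeries Unit R) i) := by
    intro i; fin_cases i
    · exact hu
    · exact hv
  set d : Unit →₀ ℕ := Finsupp.single () 1 with hd
  have hwd : wt d = 1 := wt_single () 1
  rw [coeff_msubst two_ne_zero _ hab f d _ (subset_refl _)]
  set s10 : Fin 2 →₀ ℕ := Finsupp.single 0 1 with hs10
  set s01 : Fin 2 →₀ ℕ := Finsupp.single 1 1 with hs01
  have hne : s10 ≠ s01 := by
    intro h
    have := congrArg (fun g => g (0 : Fin 2)) h
    simp [hs10, hs01] at this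
  have hsub : ({s10, s01} : Finset (Fin 2 →₀ ℕ)) ⊆ Finset.Iic (cc 2 (wt d)) := by
    intro x hx
    rw [Finset.mem_insert, Finset.mem_singleton] at hx
    rw [mem_Iic_cc, hwd]
    rcases hx with h | h <;> (subst h; intro i; fin_cases i <;> simp [hs10, hs01, Finsupp.single_apply])
  have hvan : ∀ x ∈ Finset.Iic (cc 2 (wt d)), x ∉ ({s10, s01} : Finset (Fin 2 →₀ ℕ)) →
      MvPowerSeries.coeff x f * MvPowerSeries.coeff d (∏ i, ![u, v] i ^ x i) = 0 := by
    intro x hx hxn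
    rw [mem_Iic_cc, hwd] at hx
    rw [Finset.mem_insert, Finset.mem_singleton] at hxn
    push_neg at hxn
    have h0 := hx 0
    have h1 := hx 1
    have hprod : (∏ i, (![u, v] : Fin 2 → MvPowerSeries Unit R) i ^ x i) = u ^ x 0 * v ^ x 1 := by
      rw [Fin.prod_univ_two]; rfl
    have hdne : d ≠ 0 := by
      rw [hd]; intro hc
      have := congrArg (fun g => g ()) hc
      simp at this
    interval_cases h0' : (x 0) <;> interval_cases h1' : (x 1)
    · -- x = 0
      rw [hprod]
      simp only [pow_zero, one_mul]
      rw [MvPowerSeries.coeff_one, if_neg hdne, mul_zero]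
    · -- x = s01
      exfalso; apply hxn.2; ext i; fin_cases i <;> simp [hs01, h0', h1', Finsupp.single_apply]
    · -- x = s10
      exfalso; apply hxn.1; ext i; fin_cases i <;> simp [hs10, h0', h1', Finsupp.single_apply]
    · -- x = (1,1)
      rw [hprod, pow_one, pow_one, (hu.mul hv) d (by omega), mul_zero]
  rw [← Finset.sum_subset hsub hvan, Finset.sum_pair hne]
  have hp10 : (∏ i, (![u, v] : Fin 2 → MvPowerSeries Unit R) i ^ s10 i) = u := by
    rw [Fin.prod_univ_two]
    have e0 : s10 0 = 1 := by simp [hs10]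
    have e1 : s10 1 = 0 := by simp [hs10, Finsupp.single_apply]
    show u ^ s10 0 * v ^ s10 1 = u
    rw [e0, e1, pow_one, pow_zero, mul_one]
  have hp01 : (∏ i, (![u, v] : Fin 2 → MvPowerSeries Unit R) i ^ s01 i) = v := by
    rw [Fin.prod_univ_two]
    have e0 : s01 0 = 0 := by simp [hs01, Finsupp.single_apply]
    have e1 : s01 1 = 1 := by simp [hs01]
    show u ^ s01 0 * v ^ s01 1 = v
    rw [e0, e1, pow_one, pow_zero, one_mul]
  rw [hp10, hp01]

variable (F : MvPowerSeries (Fin 2) R) (ι : PowerSeries R)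

lemma coeff_F10 (hF : IsFGL F) :
    MvPowerSeries.coeff (Finsupp.single (0 : Fin 2) 1) F = 1 := by
  have hX' : LB 1 ((PowerSeries.X : PowerSeries R) : MvPowerSeries Unit R) :=
    LB_one PowerSeries.constantCoeff_X
  have h := congrArg (MvPowerSeries.coeff (Finsupp.single () 1))
    (F_unit_right F hF (PowerSeries.X : PowerSeries R) hX')
  rw [coeff_one_msubst2 _ _ hX' LB_one_zero F] at h
  rw [coeff_unit, coeff_unit, PowerSeries.coeff_one_X] at h
  simpa using h

lemma coeff_F01 (hF : IsFGL F) :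
    MvPowerSeries.coeff (Finsupp.single (1 : Fin 2) 1) F = 1 := by
  have hX' : LB 1 ((PowerSeries.X : PowerSeries R) : MvPowerSeries Unit R) :=
    LB_one PowerSeries.constantCoeff_X
  have h := congrArg (MvPowerSeries.coeff (Finsupp.single () 1))
    (F_unit_left F hF (PowerSeries.X : PowerSeries R) hX')
  rw [coeff_one_msubst2 _ _ LB_one_zero hX' F] at h
  rw [coeff_unit, coeff_unit, PowerSeries.coeff_one_X] at h
  simpa using h

lemma coeff_iota_one (hF : IsFGL F) (hι : IsFormalInverse F ι) :
    PowerSeries.coeff 1 ι = -1 := by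
  have hX' : LB 1 ((PowerSeries.X : PowerSeries R) : MvPowerSeries Unit R) :=
    LB_one PowerSeries.constantCoeff_X
  have hli : LB 1 (ι : MvPowerSeries Unit R) := LB_one hι.1
  have h := congrArg (MvPowerSeries.coeff (Finsupp.single () 1)) hι.2
  rw [coeff_one_msubst2 _ _ hX' hli F, coeff_unit, coeff_unit, PowerSeries.coeff_one_X,
    coeff_F10 F hF, coeff_F01 F hF] at h
  simp only [map_zero, mul_one, one_mul] at h
  linear_combination h

end Coeffs

section Unique

lemma g_pow_low {g : PowerSeries R} (hg : ∀ m < 2, PowerSeries.coeff m g = 0)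
    (n m : ℕ) (hm : m < 2 * n) : PowerSeries.coeff m (g ^ n) = 0 := by
  have hLB : LB (τ := Unit) (R := R) (n * 2) (g ^ n) := (LB_of_forall hg).pow n
  rw [← coeff_unit]
  exact hLB _ (by rw [wt_single]; omega)

lemma g_pow_top {g : PowerSeries R} (hg : ∀ m < 2, PowerSeries.coeff m g = 0)
    (h2 : PowerSeries.coeff 2 g = 1) (n : ℕ) :
    PowerSeries.coeff (2 * n) (g ^ n) = 1 := by
  induction n with
  | zero => simp
  | succ n ih =>
    rw [pow_succ, PowerSeries.coeff_mul, Finset.sum_eq_single (2 * n, 2)]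
    · rw [ih, h2, one_mul]
    · intro p hp hpne
      rw [Finset.HasAntidiagonal.mem_antidiagonal] at hp
      rcases lt_or_ge p.1 (2 * n) with h | h
      · rw [g_pow_low hg n p.1 h, zero_mul]
      · have hne2 : p.1 ≠ 2 * n ∨ p.2 ≠ 2 := by
          by_contra hc
          push_neg at hc
          exact hpne (Prod.ext hc.1 hc.2)
        have hp2 : p.2 < 2 := by
          rcases hne2 with h' | h' <;> omega
        rw [hg p.2 hp2, mul_zero]
    · intro hmem
      exact absurd (Finset.HasAntidiagonal.mem_antidiagonal.2 (by omega)) hmem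

lemma psubst_eq_zero_imp {g : PowerSeries R} (hg : ∀ m < 2, PowerSeries.coeff m g = 0)
    (h2 : PowerSeries.coeff 2 g = 1) (h : PowerSeries R)
    (hh : psubst (g : MvPowerSeries Unit R) h = 0) : h = 0 := by
  have hLB : LB 1 (g : MvPowerSeries Unit R) := (LB_of_forall hg).mono (by omega)
  apply PowerSeries.ext
  intro n
  induction n using Nat.strong_induction_on with
  | _ n ih =>
    have hc := congrArg (MvPowerSeries.coeff (Finsupp.single () (2 * n))) hh
    rw [coeff_psubst _ hLB h _ (2 * n + 1) (by rw [wt_single]; omega), map_zero] at hc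
    rw [Finset.sum_eq_single n] at hc
    · rw [coeff_unit, g_pow_top hg h2 n, mul_one] at hc
      simpa using hc
    · intro i hi hine
      rw [Finset.mem_range] at hi
      rcases lt_or_ge i n with h' | h'
      · rw [ih i h', map_zero, zero_mul]
      · have : n < i := by omega
        rw [coeff_unit, g_pow_low hg i (2 * n) (by omega), mul_zero]
    · intro hmem
      exact absurd (Finset.mem_range.2 (by omega)) hmem

lemma psubst_unique {g : PowerSeries R} (hg : ∀ m < 2, PowerSeries.coeff m g = 0)
    (h2 : PowerSeries.coeff 2 g = 1) (φ : PowerSeries R)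
    (hφ : psubst (g : MvPowerSeries Unit R) φ = g) : φ = PowerSeries.X := by
  have hLB : LB 1 (g : MvPowerSeries Unit R) := (LB_of_forall hg).mono (by omega)
  have hsub : psubst (g : MvPowerSeries Unit R) (φ - PowerSeries.X)
      = psubst (g : MvPowerSeries Unit R) φ - psubst (g : MvPowerSeries Unit R) PowerSeries.X := by
    exact map_sub (psubstHom (g : MvPowerSeries Unit R) hLB) φ PowerSeries.X
  rw [hφ, psubst_X _ hLB, sub_self] at hsub
  have := psubst_eq_zero_imp hg h2 _ hsub
  exact sub_eq_zero.1 this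
end Unique

end FGLAux
end Aux
/-- For a formal group law `F` with formal inverse `ι` one has `ι(ι(X)) = X`,
hence `−ι(X)·ι(ι(X)) = −X·ι(X)`, and the unique composable power series `φ` with
`φ(−X·ι(X)) = −ι(X)·ι(ι(X))` is the identity series `φ(T) = T`, which is also the series
associated to the identity morphism of `F` (so the functor `N` is not faithful). -/
theorem stmt_11 {R : Type*} [CommRing R] (F : MvPowerSeries (Fin 2) R) (hF : IsFGL F)
    (ι : PowerSeries R) (hι : IsFormalInverse F ι) :
    psubst ι ι = PowerSeries.X ∧
    -(ι * psubst ι ι) = -(PowerSeries.X * ι) ∧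
    (∀ φ : PowerSeries R, PowerSeries.constantCoeff φ = 0 →
      psubst (-(PowerSeries.X * ι)) φ = -(ι * psubst ι ι) → φ = PowerSeries.X) ∧
    (∀ φ : PowerSeries R, PowerSeries.constantCoeff φ = 0 →
      psubst (-(PowerSeries.X * ι)) φ
          = -(PowerSeries.X * psubst ι (PowerSeries.X : PowerSeries R)) →
        φ = PowerSeries.X) := by
  have hli : FGLAux.LB 1 (ι : MvPowerSeries Unit R) := FGLAux.LB_one hι.1
  have p1 : psubst ι ι = (PowerSeries.X : PowerSeries R) := FGLAux.iota_iota F ι hF hι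
  have p2 : -(ι * psubst ι ι) = -(PowerSeries.X * ι) := by rw [p1, mul_comm]
  have hg : ∀ m < 2, PowerSeries.coeff m (-(PowerSeries.X * ι)) = 0 := by
    intro m hm
    interval_cases m
    · rw [map_neg, mul_comm, PowerSeries.coeff_zero_mul_X, neg_zero]
    · rw [map_neg, mul_comm, PowerSeries.coeff_succ_mul_X 0 ι]
      rw [PowerSeries.coeff_zero_eq_constantCoeff]
      rw [hι.1, neg_zero]
  have h2 : PowerSeries.coeff 2 (-(PowerSeries.X * ι)) = 1 := by
    rw [map_neg, mul_comm, PowerSeries.coeff_succ_mul_X 1 ι,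
      FGLAux.coeff_iota_one F ι hF hι, neg_neg]
  refine ⟨p1, p2, ?_, ?_⟩
  · intro φ _ heq
    rw [p2] at heq
    exact FGLAux.psubst_unique hg h2 φ heq
  · intro φ _ heq
    rw [FGLAux.psubst_X (ι : MvPowerSeries Unit R) hli] at heq
    exact FGLAux.psubst_unique hg h2 φ heq
end
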